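/- arXiv:1605.08545 — 4 statements merged into one kernel-verified Lean document; each statement's English description precedes it below -/
import Mathlib

section
/- For every regular multisegment m = Δ_1 + ⋯ + Δ_k, the complexity equals the number of ≺-related pairs: c(m) = #{(i,j) : 1 ≤ i, j ≤ k, Δ_i ≺ Δ_j}. -/
/-! ## Segments and multisegments -/

structure Segment where
  a : ℤ
  b : ℤ
  nonempty : a ≤ b

namespace Segment

/-- `Δ ≺ Δ'`. -/
def prec (Δ Δ' : Segment) : Prop :=
  Δ.a < Δ'.a ∧ Δ'.a ≤ Δ.b + 1 ∧ Δ.b < Δ'.b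

def linked (Δ Δ' : Segment) : Prop := prec Δ Δ' ∨ prec Δ' Δ

/-- `←Δ = [a-1, b-1]`. -/
def shiftl (Δ : Segment) : Segment :=
  ⟨Δ.a - 1, Δ.b - 1, by have := Δ.nonempty; omega⟩

end Segment

abbrev Multisegment := Multiset Segment

/-- `Step m n` means `m ⊢ n`: `m` is obtained from `n` by replacing a pair of linked
segments of `n` by its offspring. -/
def Step (m n : Multisegment) : Prop :=
  ∃ (Δ Δ' : Segment) (r : Multisegment),
    Segment.prec Δ Δ' ∧ n = Δ ::ₘ Δ' ::ₘ r ∧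
    ((Δ'.a ≤ Δ.b ∧ ∃ E F : Segment,
        E.a = Δ.a ∧ E.b = Δ'.b ∧ F.a = Δ'.a ∧ F.b = Δ.b ∧ m = E ::ₘ F ::ₘ r) ∨
     (Δ'.a = Δ.b + 1 ∧ ∃ E : Segment, E.a = Δ.a ∧ E.b = Δ'.b ∧ m = E ::ₘ r))

/-- `Obt m n` means `m ⊨ n`: reflexive-transitive closure of `⊢`. -/
def Obt : Multisegment → Multisegment → Prop := Relation.ReflTransGen Step

def PairwiseUnlinked (m : Multisegment) : Prop :=
  ∀ (Δ Δ' : Segment) (r : Multisegment), m = Δ ::ₘ Δ' ::ₘ r → ¬ Segment.linked Δ Δ'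

/-- `StepN l m n` : there is a chain of `l` steps `m = m_l ⊢ m_{l-1} ⊢ ⋯ ⊢ m_1 ⊢ n`. -/
def StepN : ℕ → Multisegment → Multisegment → Prop
  | 0, m, n => m = n
  | l + 1, m, n => ∃ p, Step m p ∧ StepN l p n

/-- The complexity `c(m)`: the maximal `l` for which there is a chain of `l` steps ending at `m`. -/
noncomputable def complexity (m : Multisegment) : ℕ :=
  sSup {l : ℕ | ∃ m', StepN l m' m}

/-- Almost pairwise unlinked. -/
def APU (m : Multisegment) : Prop :=
  ∃ m', PairwiseUnlinked m' ∧ Step m' m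

/-- The depth `d(m)`: the number of APU multisegments `n` with `n ⊨ m`. -/
noncomputable def depth (m : Multisegment) : ℕ :=
  {n : Multisegment | APU n ∧ Obt n m}.ncard

def Regular (m : Multisegment) : Prop :=
  (m.map Segment.a).Nodup ∧ (m.map Segment.b).Nodup

def IsBalanced (m : Multisegment) : Prop :=
  Regular m ∧ depth m = complexity m

/-! ## Enumerated multisegments and the (GLS) condition -/

/-- The multisegment `Δ_0 + ⋯ + Δ_{k-1}` attached to an enumeration `Δ : ℕ → Segment`. -/
def msOf (k : ℕ) (Δ : ℕ → Segment) : Multisegment :=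
  ↑((List.range k).map Δ)

def Xset (k : ℕ) (Δ : ℕ → Segment) : Set (ℕ × ℕ) :=
  {p | p.1 < k ∧ p.2 < k ∧ (Δ p.1).prec (Δ p.2)}

def Xtil (k : ℕ) (Δ : ℕ → Segment) : Set (ℕ × ℕ) :=
  {p | p.1 < k ∧ p.2 < k ∧ ((Δ p.1).shiftl).prec (Δ p.2)}

open Classical in
/-- The vector `x_{i,j}(λ) ∈ ℂ^{X̃_m}` (viewed inside the functions `ℕ × ℕ → ℂ`). -/
noncomputable def glsVec (k : ℕ) (Δ : ℕ → Segment) (lam : ℕ → ℕ → ℂ) (i j : ℕ) :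
    ℕ × ℕ → ℂ := fun p =>
  (if p.1 = i ∧ (p.2, j) ∈ Xset k Δ ∧ (i, p.2) ∈ Xtil k Δ then lam p.2 j else 0) -
  (if p.2 = j ∧ (p.1, j) ∈ Xtil k Δ ∧ (i, p.1) ∈ Xset k Δ then lam i p.1 else 0)

/-- Condition (GLS). -/
def GLS (k : ℕ) (Δ : ℕ → Segment) : Prop :=
  ∃ lam : ℕ → ℕ → ℂ,
    LinearIndependent ℂ (fun p : Xset k Δ => glsVec k Δ lam p.1.1 p.1.2)

/-- The relation `⤳` between `X_m` and `X̃_m`. -/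
def leadsTo (Δ : ℕ → Segment) (x y : ℕ × ℕ) : Prop :=
  (x.1 = y.1 ∧ (Δ y.2).prec (Δ x.2)) ∨ (x.2 = y.2 ∧ (Δ x.1).prec (Δ y.1))

/-- `N_{i,j} = {y ∈ X̃_m : (i,j) ⤳ y}`. -/
def Nset (k : ℕ) (Δ : ℕ → Segment) (x : ℕ × ℕ) : Set (ℕ × ℕ) :=
  {y ∈ Xtil k Δ | leadsTo Δ x y}

/-- The labelled relation `x ⤳^r y`. -/
def LabRel (k : ℕ) (Δ : ℕ → Segment) (x r y : ℕ × ℕ) : Prop :=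
  (x.1 = y.1 ∧ r = (y.2, x.2) ∧ x ∈ Xset k Δ ∧ r ∈ Xset k Δ ∧ y ∈ Xtil k Δ) ∨
  (x.2 = y.2 ∧ r = (x.1, y.1) ∧ x ∈ Xset k Δ ∧ r ∈ Xset k Δ ∧ y ∈ Xtil k Δ)

/-- Multisegments of type 4231. -/
def Type4231 (m : Multisegment) : Prop :=
  ∃ (k : ℕ) (Δ : ℕ → Segment), 4 ≤ k ∧ m = msOf k Δ ∧ Regular m ∧
    (∀ i j, i < j → j < k → (Δ j).b < (Δ i).b) ∧
    (∀ i, 2 ≤ i → i + 1 < k → (Δ (i + 1)).prec (Δ i)) ∧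
    (Δ 2).prec (Δ 0) ∧
    (Δ (k - 1)).a < (Δ 1).a ∧ (Δ 1).a < (Δ (k - 2)).a

/-- Multisegments of type 3412. -/
def Type3412 (m : Multisegment) : Prop :=
  ∃ (k : ℕ) (Δ : ℕ → Segment), 4 ≤ k ∧ m = msOf k Δ ∧ Regular m ∧
    (∀ i j, i < j → j < k → (Δ j).b < (Δ i).b) ∧
    (∀ i, 3 ≤ i → i + 1 < k → (Δ (i + 1)).prec (Δ i)) ∧
    (Δ 3).prec (Δ 1) ∧
    (Δ 2).a < (Δ (k - 1)).a ∧ (Δ (k - 1)).a < (Δ 0).a ∧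
    (Δ 0).a < (Δ (if k = 4 then 1 else k - 2)).a

/-- `Δ_i` is a detachable segment of `Δ_0 + ⋯ + Δ_{k-1}`. -/
def Detachable (k : ℕ) (Δ : ℕ → Segment) (i : ℕ) : Prop :=
  (∀ j, j < k → j ≠ i → ¬ (Δ i).prec (Δ j) ∧ ¬ ((Δ i).shiftl).prec (Δ j)) ∨
  (∀ j, j < k → j ≠ i → ¬ (Δ j).prec (Δ i) ∧ ¬ ((Δ j).shiftl).prec (Δ i))

/-! ## Permutations, Bruhat order, smooth pairs -/

/-- The rank function `r_σ(i,j)` (0-based). -/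
def rankFn {k : ℕ} (σ : Equiv.Perm (Fin k)) (i j : Fin k) : ℕ :=
  (Finset.univ.filter fun u : Fin k => u ≤ i ∧ σ u ≤ j).card

/-- The Bruhat order, via the rank-function characterization. -/
def BruhatLE {k : ℕ} (τ σ : Equiv.Perm (Fin k)) : Prop :=
  ∀ i j : Fin k, rankFn σ i j ≤ rankFn τ i j

/-- The length `ℓ(σ)`. -/
def lenPerm {k : ℕ} (σ : Equiv.Perm (Fin k)) : ℕ :=
  (Finset.univ.filter fun p : Fin k × Fin k => p.1 < p.2 ∧ σ p.2 < σ p.1).card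

def IsTransposition {k : ℕ} (t : Equiv.Perm (Fin k)) : Prop :=
  ∃ i j : Fin k, i ≠ j ∧ t = Equiv.swap i j

/-- `(σ, σ0)` is a smooth pair. -/
def SmoothPair {k : ℕ} (σ0 σ : Equiv.Perm (Fin k)) : Prop :=
  BruhatLE σ0 σ ∧
    {t : Equiv.Perm (Fin k) | IsTransposition t ∧ BruhatLE (σ0 * t) σ}.ncard = lenPerm σ

/-- The ascent set `D(σ)` of a permutation, in 1-based indexing. -/
def Dset {k : ℕ} (σ : Equiv.Perm (Fin k)) : Set ℕ :=
  {i | ∃ (h1 : 1 ≤ i) (h2 : i < k), (σ ⟨i - 1, by omega⟩ : ℕ) < (σ ⟨i, h2⟩ : ℕ)} ∪ {k}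

/-- The flattened permutation `rmv_i(σ)`. -/
def rmv {k : ℕ} (σ : Equiv.Perm (Fin (k + 1))) (i : Fin (k + 1)) : Equiv.Perm (Fin k) :=
  ((finSuccAboveEquiv i).trans
    (σ.subtypeEquiv fun x => not_congr (EmbeddingLike.apply_eq_iff_eq σ).symm)).trans
    (finSuccAboveEquiv (σ i)).symm

/-! ## Bi-sequences -/

structure BiSeq (k : ℕ) where
  a : Fin k → ℤ
  b : Fin k → ℤ
  mono_a : Monotone a
  anti_b : Antitone b
  compat : ∀ i : Fin k, a i.rev ≤ b i + 1

def RegularBS {k : ℕ} (A : BiSeq k) : Prop := StrictMono A.a ∧ StrictAnti A.b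

/-- `σ` satisfies the defining recursion of `σ0(A)`. -/
def Sigma0Spec {k : ℕ} (A : BiSeq k) (σ : Equiv.Perm (Fin k)) : Prop :=
  ∀ i : Fin k,
    A.a (σ.symm i) ≤ A.b i + 1 ∧
    ∀ j : Fin k, A.a j ≤ A.b i + 1 → (∀ i' : Fin k, i < i' → σ.symm i' ≠ j) →
      j ≤ σ.symm i

def Avoids213 {k : ℕ} (σ : Equiv.Perm (Fin k)) : Prop :=
  ¬ ∃ i j l : Fin k, i < j ∧ j < l ∧ σ j < σ i ∧ σ i < σ l

/-- The multisegment `m_σ(A)`, consisting of the nonempty intervals among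
`[a_{σ⁻¹(i)}, b_i]`. -/
def mOf {k : ℕ} (A : BiSeq k) (σ : Equiv.Perm (Fin k)) : Multisegment :=
  ((Finset.univ.filter fun i : Fin k => A.a (σ.symm i) ≤ A.b i).attach.val).map
    fun i => { a := A.a (σ.symm i.1), b := A.b i.1,
               nonempty := by have := Finset.mem_filter.mp i.2; exact this.2 }

/-! ## Permutation matrices -/

def PermMat {k : ℕ} (σ : Equiv.Perm (Fin k)) : Matrix (Fin k) (Fin k) ℕ :=
  fun i j => if σ i = j then 1 else 0

/-- The equivalence relation generated by `i ∼ j` whenever `M_{i,l} = M_{j,l} = 1` for some `l`. -/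
def matRel {k : ℕ} (M : Matrix (Fin k) (Fin k) ℕ) : Fin k → Fin k → Prop :=
  Relation.EqvGen (fun i j => ∃ l, M i l = 1 ∧ M j l = 1)

namespace Statement3Aux

instance decPrec (Δ Δ' : Segment) : Decidable (Segment.prec Δ Δ') := by
  unfold Segment.prec; infer_instance

def p (x y : Segment) : ℕ := if x.prec y then 1 else 0

def lk (x y : Segment) : ℕ := p x y + p y x

def linkCount (x : Segment) (m : Multisegment) : ℕ := (m.map (lk x)).sum

def phi (m : Multisegment) : ℕ := (m.map fun x => (m.map (p x)).sum).sum

lemma p_self (x : Segment) : p x x = 0 := by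
  simp [p, Segment.prec]

lemma phi_cons (x : Segment) (m : Multisegment) :
    phi (x ::ₘ m) = linkCount x m + phi m := by
  simp only [phi, linkCount, lk, Multiset.map_cons, Multiset.sum_cons, Multiset.sum_map_add,
    p_self]
  rw [show lk x = fun y => p x y + p y x from rfl, Multiset.sum_map_add]
  ring

lemma linkCount_cons (x y : Segment) (m : Multisegment) :
    linkCount x (y ::ₘ m) = lk x y + linkCount x m := by
  simp [linkCount, Multiset.map_cons, Multiset.sum_cons]

lemma phi_cons2 (x y : Segment) (m : Multisegment) :
    phi (x ::ₘ y ::ₘ m) = lk x y + linkCount x m + linkCount y m + phi m := by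
  rw [phi_cons, linkCount_cons, phi_cons]; ring

lemma lk_of_prec {x y : Segment} (h : x.prec y) : lk x y = 1 := by
  have h' := h
  simp only [Segment.prec] at h'
  simp only [lk, p]
  split_ifs <;> simp only [Segment.prec] at * <;> omega

lemma key1_le (D D' E F G : Segment) (h : D.prec D')
    (hEa : E.a = D.a) (hEb : E.b = D'.b) (hFa : F.a = D'.a) (hFb : F.b = D.b)
    (ha : G.a ≠ D.a) (ha' : G.a ≠ D'.a) (hb : G.b ≠ D.b) (hb' : G.b ≠ D'.b) :
    lk E G + lk F G ≤ lk D G + lk D' G := by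
  simp only [Segment.prec] at h
  have h1 := G.nonempty
  simp only [lk, p, hEa, hEb, hFa, hFb]
  split_ifs <;> simp only [Segment.prec] at * <;> omega

lemma key1_eq (D D' E F G : Segment) (h : D.prec D')
    (hEa : E.a = D.a) (hEb : E.b = D'.b) (hFa : F.a = D'.a) (hFb : F.b = D.b)
    (ha : G.a ≠ D.a) (ha' : G.a ≠ D'.a) (hb : G.b ≠ D.b) (hb' : G.b ≠ D'.b)
    (hmid : ¬ (D.prec G ∧ G.prec D')) :
    lk E G + lk F G = lk D G + lk D' G := by
  simp only [Segment.prec] at h hmid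
  have h1 := G.nonempty
  simp only [lk, p, hEa, hEb, hFa, hFb]
  split_ifs <;> simp only [Segment.prec] at * <;> omega

lemma key2_le (D D' E G : Segment) (h : D.prec D') (hj : D'.a = D.b + 1)
    (hEa : E.a = D.a) (hEb : E.b = D'.b)
    (ha : G.a ≠ D.a) (ha' : G.a ≠ D'.a) (hb : G.b ≠ D.b) (hb' : G.b ≠ D'.b) :
    lk E G ≤ lk D G + lk D' G := by
  simp only [Segment.prec] at h
  have h1 := G.nonempty
  simp only [lk, p, hEa, hEb]
  split_ifs <;> simp only [Segment.prec] at * <;> omega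

lemma key2_eq (D D' E G : Segment) (h : D.prec D') (hj : D'.a = D.b + 1)
    (hEa : E.a = D.a) (hEb : E.b = D'.b)
    (ha : G.a ≠ D.a) (ha' : G.a ≠ D'.a) (hb : G.b ≠ D.b) (hb' : G.b ≠ D'.b)
    (hmid : ¬ (D.prec G ∧ G.prec D')) :
    lk E G = lk D G + lk D' G := by
  simp only [Segment.prec] at h hmid
  have h1 := G.nonempty
  simp only [lk, p, hEa, hEb]
  split_ifs <;> simp only [Segment.prec] at * <;> omega

lemma lk_EF (D D' E F : Segment) (h : D.prec D')
    (hEa : E.a = D.a) (hEb : E.b = D'.b) (hFa : F.a = D'.a) (hFb : F.b = D.b) :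
    lk E F = 0 := by
  simp only [Segment.prec] at h
  simp only [lk, p, hEa, hEb, hFa, hFb]
  split_ifs <;> simp only [Segment.prec] at * <;> omega

/-- Extract distinctness facts from regularity of `D ::ₘ D' ::ₘ r`. -/
lemma reg_facts {D D' : Segment} {r : Multisegment}
    (hreg : Regular (D ::ₘ D' ::ₘ r)) :
    ∀ G ∈ r, G.a ≠ D.a ∧ G.a ≠ D'.a ∧ G.b ≠ D.b ∧ G.b ≠ D'.b := by
  obtain ⟨h1, h2⟩ := hreg
  simp only [Multiset.map_cons, Multiset.nodup_cons, Multiset.mem_cons, Multiset.mem_map] at h1 h2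
  intro G hG
  refine ⟨?_, ?_, ?_, ?_⟩
  · intro hc; exact h1.1 (Or.inr ⟨G, hG, hc⟩)
  · intro hc; exact h1.2.1 ⟨G, hG, hc⟩
  · intro hc; exact h2.1 (Or.inr ⟨G, hG, hc⟩)
  · intro hc; exact h2.2.1 ⟨G, hG, hc⟩

lemma step_lemma {m' m : Multisegment} (h : Step m' m) (hreg : Regular m) :
    Regular m' ∧ phi m' < phi m := by
  obtain ⟨D, D', r, hprec, hm, hcase⟩ := h
  subst hm
  have hfacts := reg_facts hreg
  rcases hcase with ⟨hle, E, F, hEa, hEb, hFa, hFb, hm'⟩ | ⟨hj, E, hEa, hEb, hm'⟩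
  · subst hm'
    constructor
    · obtain ⟨h1, h2⟩ := hreg
      constructor
      · simpa only [Multiset.map_cons, hEa, hFa] using h1
      · have : (D ::ₘ D' ::ₘ r).map Segment.b = (D' ::ₘ D ::ₘ r).map Segment.b := by
          rw [Multiset.cons_swap]
        rw [this] at h2
        simpa only [Multiset.map_cons, hEb, hFb] using h2
    · rw [phi_cons2, phi_cons2, lk_of_prec hprec, lk_EF D D' E F hprec hEa hEb hFa hFb]
      have hsum : linkCount E r + linkCount F r ≤ linkCount D r + linkCount D' r := by
        simp only [linkCount, ← Multiset.sum_map_add]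
        refine Multiset.sum_map_le_sum_map _ _ fun G hG => ?_
        obtain ⟨ha, ha', hb, hb'⟩ := hfacts G hG
        exact key1_le D D' E F G hprec hEa hEb hFa hFb ha ha' hb hb'
      omega
  · subst hm'
    constructor
    · obtain ⟨h1, h2⟩ := hreg
      simp only [Multiset.map_cons, Multiset.nodup_cons, Multiset.mem_cons] at h1 h2
      constructor
      · simp only [Multiset.map_cons, Multiset.nodup_cons, hEa]
        exact ⟨fun hc => h1.1 (Or.inr hc), h1.2.2⟩
      · simp only [Multiset.map_cons, Multiset.nodup_cons, hEb]
        exact h2.2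
    · rw [phi_cons2, phi_cons, lk_of_prec hprec]
      have hsum : linkCount E r ≤ linkCount D r + linkCount D' r := by
        simp only [linkCount, ← Multiset.sum_map_add]
        refine Multiset.sum_map_le_sum_map _ _ fun G hG => ?_
        obtain ⟨ha, ha', hb, hb'⟩ := hfacts G hG
        exact key2_le D D' E G hprec hj hEa hEb ha ha' hb hb'
      omega

lemma exists_prec_pair {m : Multisegment} (hpos : phi m ≠ 0) :
    ∃ x ∈ m, ∃ y ∈ m, x.prec y := by
  by_contra hc
  push_neg at hc
  apply hpos
  apply Multiset.sum_eq_zero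
  intro n hn
  rw [Multiset.mem_map] at hn
  obtain ⟨x, hx, rfl⟩ := hn
  apply Multiset.sum_eq_zero
  intro n hn
  rw [Multiset.mem_map] at hn
  obtain ⟨y, hy, rfl⟩ := hn
  simp [p, hc x hx y hy]

lemma good_step {m : Multisegment} (hreg : Regular m) (hpos : phi m ≠ 0) :
    ∃ m', Step m' m ∧ phi m' + 1 = phi m := by
  classical
  -- choose a prec-pair minimizing (y.b - x.a).toNat
  set S : Set ℕ := {n | ∃ x ∈ m, ∃ y ∈ m, x.prec y ∧ (y.b - x.a).toNat = n} with hS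
  have hne : S.Nonempty := by
    obtain ⟨x, hx, y, hy, hxy⟩ := exists_prec_pair hpos
    exact ⟨_, x, hx, y, hy, hxy, rfl⟩
  obtain ⟨x, hx, y, hy, hxy, hval⟩ := Nat.sInf_mem hne
  have hmid : ∀ G ∈ m, ¬ (x.prec G ∧ G.prec y) := by
    rintro G hG ⟨h1, h2⟩
    have hmem : (G.b - x.a).toNat ∈ S := ⟨x, hx, G, hG, h1, rfl⟩
    have hle := Nat.sInf_le hmem
    have e1 : x.a < G.a := h1.1
    have e2 : G.a ≤ G.b := G.nonempty
    have e3 : G.b < y.b := h2.2.2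
    omega
  have hxy' : x ≠ y := fun hc => by
    have := hxy.1; rw [hc] at this; omega
  have hy2 : y ∈ m.erase x := (Multiset.mem_erase_of_ne hxy'.symm).2 hy
  set r : Multisegment := (m.erase x).erase y with hr
  have hm : m = x ::ₘ y ::ₘ r := by
    rw [hr, Multiset.cons_erase hy2, Multiset.cons_erase hx]
  rw [hm] at hreg ⊢
  have hfacts := reg_facts hreg
  have hmid' : ∀ G ∈ r, ¬ (x.prec G ∧ G.prec y) := fun G hG =>
    hmid G (by rw [hm]; exact Multiset.mem_cons_of_mem (Multiset.mem_cons_of_mem hG))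
  have hprec := hxy
  have hab : x.a ≤ x.b := x.nonempty
  have hab' : y.a ≤ y.b := y.nonempty
  have h1 := hprec.1
  have h2 := hprec.2.1
  have h3 := hprec.2.2
  by_cases hc : y.a ≤ x.b
  · refine ⟨⟨x.a, y.b, by omega⟩ ::ₘ ⟨y.a, x.b, by omega⟩ ::ₘ r, ?_, ?_⟩
    · exact ⟨x, y, r, hprec, rfl, Or.inl ⟨hc, ⟨x.a, y.b, by omega⟩, ⟨y.a, x.b, by omega⟩, rfl, rfl, rfl, rfl, rfl⟩⟩
    · rw [phi_cons2, phi_cons2, lk_of_prec hprec,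
        lk_EF x y ⟨x.a, y.b, by omega⟩ ⟨y.a, x.b, by omega⟩ hprec rfl rfl rfl rfl]
      have hsum : linkCount ⟨x.a, y.b, by omega⟩ r + linkCount ⟨y.a, x.b, by omega⟩ r
          = linkCount x r + linkCount y r := by
        simp only [linkCount, ← Multiset.sum_map_add]
        congr 1
        refine Multiset.map_congr rfl fun G hG => ?_
        obtain ⟨ha, ha', hb, hb'⟩ := hfacts G hG
        exact key1_eq x y _ _ G hprec rfl rfl rfl rfl ha ha' hb hb' (hmid' G hG)
      omega
  · have hj : y.a = x.b + 1 := by omega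
    refine ⟨⟨x.a, y.b, by omega⟩ ::ₘ r, ?_, ?_⟩
    · exact ⟨x, y, r, hprec, rfl, Or.inr ⟨hj, ⟨x.a, y.b, by omega⟩, rfl, rfl, rfl⟩⟩
    · rw [phi_cons2, phi_cons, lk_of_prec hprec]
      have hsum : linkCount ⟨x.a, y.b, by omega⟩ r = linkCount x r + linkCount y r := by
        simp only [linkCount, ← Multiset.sum_map_add]
        refine congrArg Multiset.sum (Multiset.map_congr rfl fun G hG => ?_)
        obtain ⟨ha, ha', hb, hb'⟩ := hfacts G hG
        exact key2_eq x y _ G hprec hj rfl rfl ha ha' hb hb' (hmid' G hG)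
      omega


lemma stepN_snoc {l : ℕ} {a b c : Multisegment} (h : StepN l a b) (h' : Step b c) :
    StepN (l + 1) a c := by
  induction l generalizing a with
  | zero => exact ⟨c, h ▸ h', rfl⟩
  | succ l ih =>
    obtain ⟨q, hq, hq'⟩ := h
    exact ⟨q, hq, ih hq'⟩

lemma stepN_unsnoc : ∀ (l : ℕ) {a c : Multisegment}, StepN (l + 1) a c →
    ∃ b, StepN l a b ∧ Step b c
  | 0, a, c, ⟨q, hq, hq'⟩ => ⟨a, rfl, hq' ▸ hq⟩
  | l + 1, a, c, ⟨q, hq, hq'⟩ => by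
    obtain ⟨b, hb, hb'⟩ := stepN_unsnoc l hq'
    exact ⟨b, ⟨q, hq, hb⟩, hb'⟩

lemma stepN_le : ∀ (l : ℕ) {m' m : Multisegment}, Regular m → StepN l m' m → l ≤ phi m := by
  intro l
  induction l with
  | zero => intro m' m _ _; omega
  | succ l ih =>
    intro m' m hreg h
    obtain ⟨b, hb, hb'⟩ := stepN_unsnoc l h
    obtain ⟨hregb, hlt⟩ := step_lemma hb' hreg
    have := ih hregb hb
    omega

lemma exists_chain : ∀ (n : ℕ) (m : Multisegment), Regular m → phi m = n →
    ∃ m', StepN n m' m := by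
  intro n
  induction n with
  | zero => intro m _ _; exact ⟨m, rfl⟩
  | succ n ih =>
    intro m hreg hphi
    obtain ⟨m₁, hstep, hphi'⟩ := good_step hreg (by omega)
    obtain ⟨hreg₁, _⟩ := step_lemma hstep hreg
    obtain ⟨m'', hm''⟩ := ih m₁ hreg₁ (by omega)
    exact ⟨m'', stepN_snoc hm'' hstep⟩

lemma complexity_eq_phi {m : Multisegment} (hreg : Regular m) : complexity m = phi m := by
  have hub : ∀ l ∈ {l : ℕ | ∃ m', StepN l m' m}, l ≤ phi m := by
    rintro l ⟨m', hm'⟩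
    exact stepN_le l hreg hm'
  apply le_antisymm
  · exact csSup_le ⟨0, m, rfl⟩ hub
  · obtain ⟨m', hm'⟩ := exists_chain (phi m) m hreg rfl
    exact le_csSup ⟨phi m, hub⟩ ⟨m', hm'⟩

lemma phi_msOf (k : ℕ) (Δ : ℕ → Segment) :
    phi (msOf k Δ) = ((Finset.range k ×ˢ Finset.range k).filter
      fun q : ℕ × ℕ => (Δ q.1).prec (Δ q.2)).card := by
  classical
  have hms : msOf k Δ = (Finset.range k).val.map Δ := by
    rw [Finset.range_val, Multiset.range, Multiset.map_coe, msOf]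
  rw [Finset.card_filter, Finset.sum_product]
  rw [Finset.sum_congr rfl (fun i _ => Finset.sum_congr rfl
    (fun j _ => (by simp [p] : (if (Δ i).prec (Δ j) then 1 else 0) = p (Δ i) (Δ j))))]
  simp only [phi, hms, Multiset.map_map, Function.comp]
  rw [Finset.sum_eq_multiset_sum]
  refine (congrArg Multiset.sum (Multiset.map_congr rfl fun i _ => ?_)).symm
  rw [Finset.sum_eq_multiset_sum]

lemma xset_ncard (k : ℕ) (Δ : ℕ → Segment) :
    (Xset k Δ).ncard = ((Finset.range k ×ˢ Finset.range k).filter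
      fun q : ℕ × ℕ => (Δ q.1).prec (Δ q.2)).card := by
  classical
  rw [← Set.ncard_coe_finset]
  congr 1
  ext q
  simp [Xset, Finset.mem_filter, Finset.mem_product, Finset.mem_range, and_assoc]

end Statement3Aux


theorem statement3 (k : ℕ) (Δ : ℕ → Segment) (hreg : Regular (msOf k Δ)) :
    complexity (msOf k Δ) = (Xset k Δ).ncard := by
  rw [Statement3Aux.complexity_eq_phi hreg, Statement3Aux.phi_msOf, Statement3Aux.xset_ncard]
end

section
/- Let A be a regular bi-sequence of length k, let σ0 = σ0(A), and let σ ∈ S_k with σ ≥ σ0 in the Bruhat order. Then d(m_σ(A)) = #{t ∈ T : σ0 ≤ σ0·t and σ0·t ≤ σ} and c(m_σ(A)) = ℓ(σ) − ℓ(σ0). Consequently, m_σ(A) is balanced if and only if (σ, σ0) is a smooth pair. -/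
namespace BMS

open Finset

variable {k : ℕ}

/-- ℕ-valued rank count. -/
def R (σ : Equiv.Perm (Fin k)) (p q : ℕ) : ℕ :=
  (Finset.univ.filter fun u : Fin k => u.val < p ∧ (σ u).val < q).card

lemma rankFn_eq (σ : Equiv.Perm (Fin k)) (i j : Fin k) :
    rankFn σ i j = R σ (i.val + 1) (j.val + 1) := by
  unfold rankFn R
  congr 1
  apply Finset.filter_congr
  intro u _
  simp only [Fin.le_def]
  omega

lemma R_clamp (σ : Equiv.Perm (Fin k)) (p q : ℕ) :
    R σ p q = R σ (min p k) (min q k) := by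
  unfold R
  congr 1
  apply Finset.filter_congr
  intro u _
  have h1 := u.isLt
  have h2 := (σ u).isLt
  constructor <;> intro h <;> omega

lemma bruhatLE_iff (τ σ : Equiv.Perm (Fin k)) :
    BruhatLE τ σ ↔ ∀ p q : ℕ, R σ p q ≤ R τ p q := by
  constructor
  · intro h p q
    rw [R_clamp σ, R_clamp τ]
    rcases Nat.eq_zero_or_pos (min p k) with h0 | hp0
    · simp only [h0]
      unfold R
      simp
    rcases Nat.eq_zero_or_pos (min q k) with h0 | hq0
    · simp only [h0]
      unfold R
      simp
    have hpk : min p k - 1 < k := by omega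
    have hqk : min q k - 1 < k := by omega
    have := h ⟨min p k - 1, hpk⟩ ⟨min q k - 1, hqk⟩
    rw [rankFn_eq, rankFn_eq] at this
    simpa only [show min p k - 1 + 1 = min p k by omega,
      show min q k - 1 + 1 = min q k by omega] using this
  · intro h i j
    rw [rankFn_eq, rankFn_eq]
    exact h _ _

lemma bruhatLE_refl (σ : Equiv.Perm (Fin k)) : BruhatLE σ σ := fun _ _ => le_rfl

lemma bruhatLE_trans {σ₁ σ₂ σ₃ : Equiv.Perm (Fin k)} (h1 : BruhatLE σ₁ σ₂)
    (h2 : BruhatLE σ₂ σ₃) : BruhatLE σ₁ σ₃ := fun i j => (h2 i j).trans (h1 i j)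

lemma R_as_sum (σ : Equiv.Perm (Fin k)) (p q : ℕ) :
    R σ p q = ∑ u : Fin k, if u.val < p ∧ (σ u).val < q then 1 else 0 := by
  unfold R
  rw [Finset.card_filter]

lemma R_succ_row (σ : Equiv.Perm (Fin k)) (x : Fin k) (q : ℕ) :
    R σ (x.val + 1) q = R σ x.val q + (if (σ x).val < q then 1 else 0) := by
  rw [R_as_sum, R_as_sum]
  rw [← Finset.sum_erase_add _ _ (Finset.mem_univ x),
    ← Finset.sum_erase_add _ _ (Finset.mem_univ x)]
  have hcong : ∀ u ∈ Finset.univ.erase x,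
      (if u.val < x.val + 1 ∧ (σ u).val < q then 1 else 0)
      = (if u.val < x.val ∧ (σ u).val < q then (1:ℕ) else 0) := by
    intro u hu
    have hne : u ≠ x := Finset.ne_of_mem_erase hu
    have h3 : u.val ≠ x.val := fun h => hne (Fin.ext h)
    have h4 : (u.val < x.val + 1 ∧ (σ u).val < q) ↔ (u.val < x.val ∧ (σ u).val < q) := by
      omega
    simp only [h4]
  rw [Finset.sum_congr rfl hcong]
  simp

lemma bruhatLE_antisymm {τ σ : Equiv.Perm (Fin k)} (h1 : BruhatLE τ σ)
    (h2 : BruhatLE σ τ) : τ = σ := by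
  rw [bruhatLE_iff] at h1 h2
  have hR : ∀ p q, R σ p q = R τ p q := fun p q => le_antisymm (h1 p q) (h2 p q)
  have hrow : ∀ (x : Fin k) (q : ℕ), ((σ x).val < q ↔ (τ x).val < q) := by
    intro x q
    have e1 := R_succ_row σ x q
    have e2 := R_succ_row τ x q
    rw [hR, hR] at e1
    rw [e1] at e2
    by_cases hσ : (σ x).val < q <;> by_cases hτ : (τ x).val < q <;>
      simp [hσ, hτ] at e2 ⊢
  apply Equiv.ext
  intro x
  have hs := hrow x ((σ x).val + 1)
  have ht := hrow x ((τ x).val + 1)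
  apply Fin.ext
  omega

lemma R_swap (σ : Equiv.Perm (Fin k)) {u v : Fin k} (huv : u < v) (p q : ℕ) :
    R (σ * Equiv.swap u v) p q + (if (u.val < p ∧ ¬ v.val < p) ∧ (σ u).val < q then 1 else 0)
    = R σ p q + (if (u.val < p ∧ ¬ v.val < p) ∧ (σ v).val < q then 1 else 0) := by
  have hne : u ≠ v := ne_of_lt huv
  have hvu : u.val < v.val := huv
  -- reindex the LHS filter by the swap
  have hre : R (σ * Equiv.swap u v) p q
      = (Finset.univ.filter fun y : Fin k =>
          ((Equiv.swap u v) y).val < p ∧ (σ y).val < q).card := by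
    unfold R
    apply Finset.card_bij' (fun x _ => (Equiv.swap u v) x) (fun y _ => (Equiv.swap u v) y)
    · intro x hx
      simp only [Finset.mem_filter, Finset.mem_univ, true_and] at hx ⊢
      simpa [Equiv.swap_apply_self] using hx
    · intro y hy
      simp only [Finset.mem_filter, Finset.mem_univ, true_and] at hy ⊢
      simpa [Equiv.swap_apply_self] using hy
    · intro x _; simp [Equiv.swap_apply_self]
    · intro y _; simp [Equiv.swap_apply_self]
  rw [hre, Finset.card_filter, R_as_sum]
  rw [← Finset.sum_erase_add _ _ (Finset.mem_univ v),
    ← Finset.sum_erase_add _ _ (Finset.mem_univ v)]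
  have huv' : u ∈ (Finset.univ.erase v (α := Fin k)) := by
    simp [Finset.mem_erase, hne]
  rw [← Finset.sum_erase_add _ _ huv', ← Finset.sum_erase_add _ _ huv']
  have hcong : ∀ y ∈ (Finset.univ.erase v).erase u,
      (if ((Equiv.swap u v) y).val < p ∧ (σ y).val < q then (1:ℕ) else 0)
      = (if y.val < p ∧ (σ y).val < q then 1 else 0) := by
    intro y hy
    have h1 : y ≠ u := Finset.ne_of_mem_erase hy
    have h2 : y ≠ v := Finset.ne_of_mem_erase (Finset.mem_of_mem_erase hy)
    rw [Equiv.swap_apply_of_ne_of_ne h1 h2]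
  rw [Finset.sum_congr rfl hcong]
  simp only [Equiv.swap_apply_left, Equiv.swap_apply_right]
  by_cases h1 : u.val < p <;> by_cases h2 : v.val < p <;>
    by_cases h3 : (σ u).val < q <;> by_cases h4 : (σ v).val < q <;>
    simp [h1, h2, h3, h4] <;> omega

/-- If `(u,v)` is an inversion of `σ`, then `σ·(u v) ≤ σ`. -/
lemma swap_le (σ : Equiv.Perm (Fin k)) {u v : Fin k} (huv : u < v) (hinv : σ v < σ u) :
    BruhatLE (σ * Equiv.swap u v) σ := by
  rw [bruhatLE_iff]
  intro p q
  have h := R_swap σ huv p q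
  have himp : ((u.val < p ∧ ¬ v.val < p) ∧ (σ u).val < q) →
      ((u.val < p ∧ ¬ v.val < p) ∧ (σ v).val < q) := by
    rintro ⟨hb, hq⟩
    exact ⟨hb, lt_trans hinv hq⟩
  by_cases hA : (u.val < p ∧ ¬ v.val < p) ∧ (σ u).val < q
  · have hB := himp hA
    simp only [hA, hB, if_true] at h
    omega
  · simp only [hA, if_false] at h
    by_cases hB : (u.val < p ∧ ¬ v.val < p) ∧ (σ v).val < q <;>
      simp only [hB, if_true, if_false] at h <;> omega

lemma mul_swap_swap (σ : Equiv.Perm (Fin k)) (u v : Fin k) :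
    (σ * Equiv.swap u v) * Equiv.swap u v = σ := by
  rw [mul_assoc, Equiv.swap_mul_self, mul_one]

/-- If `(u,v)` is not an inversion, then `σ ≤ σ·(u v)`. -/
lemma le_swap (σ : Equiv.Perm (Fin k)) {u v : Fin k} (huv : u < v) (hinv : σ u < σ v) :
    BruhatLE σ (σ * Equiv.swap u v) := by
  have h := swap_le (σ * Equiv.swap u v) huv (by
    simp only [Equiv.Perm.mul_apply, Equiv.swap_apply_left, Equiv.swap_apply_right]
    exact hinv)
  rwa [mul_swap_swap] at h

lemma len_reindex (σ : Equiv.Perm (Fin k)) (u v : Fin k) :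
    lenPerm (σ * Equiv.swap u v) =
    (Finset.univ.filter fun p : Fin k × Fin k =>
      (Equiv.swap u v) p.1 < (Equiv.swap u v) p.2 ∧ σ p.2 < σ p.1).card := by
  unfold lenPerm
  apply Finset.card_bij' (fun p _ => ((Equiv.swap u v) p.1, (Equiv.swap u v) p.2))
    (fun p _ => ((Equiv.swap u v) p.1, (Equiv.swap u v) p.2))
  · rintro ⟨x, y⟩ hp
    simp only [Finset.mem_filter, Finset.mem_univ, true_and, Equiv.Perm.mul_apply] at hp ⊢
    simpa [Equiv.swap_apply_self] using (Finset.mem_filter.mp hp).2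
  · rintro ⟨x, y⟩ hp
    simp only [Finset.mem_filter, Finset.mem_univ, true_and, Equiv.Perm.mul_apply] at hp ⊢
    exact Finset.mem_filter.mpr ⟨Finset.mem_univ _, by simpa [Equiv.swap_apply_self] using hp⟩
  · rintro ⟨x, y⟩ _; simp [Equiv.swap_apply_self]
  · rintro ⟨x, y⟩ _; simp [Equiv.swap_apply_self]

lemma len_swap (σ : Equiv.Perm (Fin k)) {u v : Fin k} (huv : u < v) (hinv : σ v < σ u) :
    lenPerm (σ * Equiv.swap u v) + 1 +
      2 * (Finset.univ.filter fun w => u < w ∧ w < v ∧ σ v < σ w ∧ σ w < σ u).card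
    = lenPerm σ := by
  classical
  have hne : u ≠ v := ne_of_lt huv
  set t := Equiv.swap u v with ht
  set Wa := Finset.univ.filter (fun w : Fin k => u < w ∧ w < v ∧ σ w < σ u) with hWa
  set Wb := Finset.univ.filter (fun w : Fin k => u < w ∧ w < v ∧ σ v < σ w) with hWb
  set Wc := Finset.univ.filter (fun w : Fin k => u < w ∧ w < v ∧ σ u < σ w) with hWc
  set Wd := Finset.univ.filter (fun w : Fin k => u < w ∧ w < v ∧ σ w < σ v) with hWd
  set M := Finset.univ.filter (fun w : Fin k => u < w ∧ w < v ∧ σ v < σ w ∧ σ w < σ u) with hM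
  set D1 := Finset.univ.filter
    (fun p : Fin k × Fin k => (p.1 < p.2 ∧ σ p.2 < σ p.1) ∧ ¬ t p.1 < t p.2) with hD1
  set D2 := Finset.univ.filter
    (fun p : Fin k × Fin k => (t p.1 < t p.2 ∧ σ p.2 < σ p.1) ∧ ¬ p.1 < p.2) with hD2
  -- step 1 : ℓ(σt) + #D1 = ℓσ + #D2
  have key1 : lenPerm (σ * t) + D1.card = lenPerm σ + D2.card := by
    rw [len_reindex, hD1, hD2]
    unfold lenPerm
    rw [Finset.card_filter, Finset.card_filter, Finset.card_filter, Finset.card_filter,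
      ← Finset.sum_add_distrib, ← Finset.sum_add_distrib]
    apply Finset.sum_congr rfl
    rintro ⟨x, y⟩ -
    by_cases hX : x < y <;> by_cases hY : t x < t y <;>
      by_cases hA : σ y < σ x <;> simp [hX, hY, hA, ← ht]
  -- explicit description of D1
  have hD1eq : D1 = insert ((u, v) : Fin k × Fin k)
      ((Wa.image fun w => (u, w)) ∪ (Wb.image fun w => (w, v))) := by
    apply Finset.ext
    rintro ⟨x, y⟩
    simp only [hD1, hWa, hWb, Finset.mem_filter, Finset.mem_univ, true_and,
      Finset.mem_insert, Finset.mem_union, Finset.mem_image, Prod.mk.injEq]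
    constructor
    · rintro ⟨⟨hxy, hA⟩, hY⟩
      have hxy' : x.val < y.val := hxy
      have huv' : u.val < v.val := huv
      by_cases hxu : x = u
      · have hxu' : x.val = u.val := congrArg Fin.val hxu
        by_cases hyv : y = v
        · exact Or.inl ⟨hxu, hyv⟩
        · have hyu : y ≠ u := by intro h; have := congrArg Fin.val h; omega
          rw [ht, hxu, Equiv.swap_apply_left,
            Equiv.swap_apply_of_ne_of_ne hyu hyv] at hY
          have hyv' : y.val ≠ v.val := fun h => hyv (Fin.ext h)
          have hvy : ¬ v.val < y.val := hY
          have hyltv : y < v := by rw [Fin.lt_def]; omega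
          refine Or.inr (Or.inl ⟨y, ⟨?_, hyltv, ?_⟩, hxu.symm, rfl⟩)
          · rw [← hxu]; exact hxy
          · rw [← hxu]; exact hA
      · have hxu' : x.val ≠ u.val := fun h => hxu (Fin.ext h)
        by_cases hxv : x = v
        · have hxv' : x.val = v.val := congrArg Fin.val hxv
          have hyu : y ≠ u := by intro h; have := congrArg Fin.val h; omega
          have hyv : y ≠ v := by intro h; have := congrArg Fin.val h; omega
          rw [ht, hxv, Equiv.swap_apply_right,
            Equiv.swap_apply_of_ne_of_ne hyu hyv] at hY
          have : ¬ u.val < y.val := hY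
          omega
        · have hxv' : x.val ≠ v.val := fun h => hxv (Fin.ext h)
          by_cases hyu : y = u
          · have hyu' : y.val = u.val := congrArg Fin.val hyu
            rw [ht, Equiv.swap_apply_of_ne_of_ne hxu hxv, hyu,
              Equiv.swap_apply_left] at hY
            have : ¬ x.val < v.val := hY
            omega
          · by_cases hyv : y = v
            · rw [ht, Equiv.swap_apply_of_ne_of_ne hxu hxv, hyv,
                Equiv.swap_apply_right] at hY
              have hxu2 : ¬ x.val < u.val := hY
              have hux : u < x := by rw [Fin.lt_def]; omega
              have hyv' : y.val = v.val := congrArg Fin.val hyv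
              have hxltv : x < v := by rw [Fin.lt_def]; omega
              refine Or.inr (Or.inr ⟨x, ⟨hux, hxltv, ?_⟩, rfl, hyv.symm⟩)
              rw [← hyv]; exact hA
            · rw [ht, Equiv.swap_apply_of_ne_of_ne hxu hxv,
                Equiv.swap_apply_of_ne_of_ne hyu hyv] at hY
              exact absurd hxy hY
    · rintro (⟨hx, hy⟩ | ⟨w, hw, hx, hy⟩ | ⟨w, hw, hx, hy⟩)
      · subst hx; subst hy
        refine ⟨⟨huv, hinv⟩, ?_⟩
        rw [ht, Equiv.swap_apply_left, Equiv.swap_apply_right]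
        exact not_lt.mpr (le_of_lt huv)
      · subst hx; subst hy
        obtain ⟨huw, hwv, hσ⟩ := hw
        refine ⟨⟨huw, hσ⟩, ?_⟩
        rw [ht, Equiv.swap_apply_left,
          Equiv.swap_apply_of_ne_of_ne (ne_of_gt huw) (ne_of_lt hwv)]
        exact not_lt.mpr (le_of_lt hwv)
      · subst hx; subst hy
        obtain ⟨huw, hwv, hσ⟩ := hw
        refine ⟨⟨hwv, hσ⟩, ?_⟩
        rw [ht, Equiv.swap_apply_right,
          Equiv.swap_apply_of_ne_of_ne (ne_of_gt huw) (ne_of_lt hwv)]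
        exact not_lt.mpr (le_of_lt huw)
  -- explicit description of D2
  have hD2eq : D2 = (Wc.image fun w => (w, u)) ∪ (Wd.image fun w => (v, w)) := by
    apply Finset.ext
    rintro ⟨x, y⟩
    simp only [hD2, hWc, hWd, Finset.mem_filter, Finset.mem_univ, true_and,
      Finset.mem_union, Finset.mem_image, Prod.mk.injEq]
    constructor
    · rintro ⟨⟨hY, hA⟩, hX⟩
      have huv' : u.val < v.val := huv
      have hxy : y < x := by
        rcases lt_trichotomy x y with h | h | h
        · exact absurd h hX
        · rw [h] at hA; exact absurd hA (lt_irrefl _)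
        · exact h
      have hxy' : y.val < x.val := hxy
      by_cases hxu : x = u
      · have hxu' : x.val = u.val := congrArg Fin.val hxu
        have hyu : y ≠ u := by intro h; have := congrArg Fin.val h; omega
        have hyv : y ≠ v := by intro h; have := congrArg Fin.val h; omega
        rw [ht, hxu, Equiv.swap_apply_left,
          Equiv.swap_apply_of_ne_of_ne hyu hyv] at hY
        have : v.val < y.val := hY
        omega
      · have hxu' : x.val ≠ u.val := fun h => hxu (Fin.ext h)
        by_cases hxv : x = v
        · have hxv' : x.val = v.val := congrArg Fin.val hxv
          by_cases hyu : y = u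
          · rw [hxv, hyu] at hA; exact absurd hA (not_lt.mpr (le_of_lt hinv))
          · have hyv : y ≠ v := by intro h; have := congrArg Fin.val h; omega
            rw [ht, hxv, Equiv.swap_apply_right,
              Equiv.swap_apply_of_ne_of_ne hyu hyv] at hY
            refine Or.inr ⟨y, ⟨hY, by rw [Fin.lt_def]; omega, ?_⟩, hxv.symm, rfl⟩
            rw [← hxv]; exact hA
        · have hxv' : x.val ≠ v.val := fun h => hxv (Fin.ext h)
          rw [ht, Equiv.swap_apply_of_ne_of_ne hxu hxv] at hY
          by_cases hyu : y = u
          · rw [hyu, Equiv.swap_apply_left] at hY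
            have hyu' : y.val = u.val := congrArg Fin.val hyu
            refine Or.inl ⟨x, ⟨by rw [Fin.lt_def]; omega, hY, ?_⟩, rfl, hyu.symm⟩
            rw [← hyu]; exact hA
          · by_cases hyv : y = v
            · rw [hyv, Equiv.swap_apply_right] at hY
              have : x.val < u.val := hY
              have hyv' : y.val = v.val := congrArg Fin.val hyv
              omega
            · rw [Equiv.swap_apply_of_ne_of_ne hyu hyv] at hY
              exact absurd hY hX
    · rintro (⟨w, hw, hx, hy⟩ | ⟨w, hw, hx, hy⟩)
      · subst hx; subst hy
        obtain ⟨huw, hwv, hσ⟩ := hw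
        refine ⟨⟨?_, hσ⟩, not_lt.mpr (le_of_lt huw)⟩
        rw [ht, Equiv.swap_apply_left,
          Equiv.swap_apply_of_ne_of_ne (ne_of_gt huw) (ne_of_lt hwv)]
        exact hwv
      · subst hx; subst hy
        obtain ⟨huw, hwv, hσ⟩ := hw
        refine ⟨⟨?_, hσ⟩, not_lt.mpr (le_of_lt hwv)⟩
        rw [ht, Equiv.swap_apply_right,
          Equiv.swap_apply_of_ne_of_ne (ne_of_gt huw) (ne_of_lt hwv)]
        exact huw
  -- cardinalities
  have hinjL : Function.Injective (fun w : Fin k => ((u, w) : Fin k × Fin k)) := by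
    intro a b h; simpa using h
  have hinjR : Function.Injective (fun w : Fin k => ((w, v) : Fin k × Fin k)) := by
    intro a b h; simpa using h
  have hinjL2 : Function.Injective (fun w : Fin k => ((w, u) : Fin k × Fin k)) := by
    intro a b h; simpa using h
  have hinjR2 : Function.Injective (fun w : Fin k => ((v, w) : Fin k × Fin k)) := by
    intro a b h; simpa using h
  have hcard1 : D1.card = 1 + Wa.card + Wb.card := by
    rw [hD1eq]
    have hdisj : Disjoint (Wa.image fun w => ((u, w) : Fin k × Fin k))
        (Wb.image fun w => ((w, v) : Fin k × Fin k)) := by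
      rw [Finset.disjoint_left]
      rintro ⟨x, y⟩ h1 h2
      simp only [Finset.mem_image, Prod.mk.injEq] at h1 h2
      obtain ⟨w1, hw1, e1, e2⟩ := h1
      obtain ⟨w2, hw2, e3, e4⟩ := h2
      rw [hWa, Finset.mem_filter] at hw1
      rw [hWb, Finset.mem_filter] at hw2
      subst e1; subst e2
      exact absurd (e3 ▸ hw2.2.1) (lt_irrefl _)
    have hnotmem : ((u, v) : Fin k × Fin k) ∉
        (Wa.image fun w => ((u, w) : Fin k × Fin k)) ∪
        (Wb.image fun w => ((w, v) : Fin k × Fin k)) := by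
      simp only [Finset.mem_union, Finset.mem_image, Prod.mk.injEq, hWa, hWb,
        Finset.mem_filter, Finset.mem_univ, true_and, not_or]
      constructor
      · rintro ⟨w, ⟨_, hwv, _⟩, _, rfl⟩; exact absurd hwv (lt_irrefl _)
      · rintro ⟨w, ⟨huw, _, _⟩, rfl, _⟩; exact absurd huw (lt_irrefl _)
    rw [Finset.card_insert_of_notMem hnotmem, Finset.card_union_of_disjoint hdisj,
      Finset.card_image_of_injective _ hinjL, Finset.card_image_of_injective _ hinjR]
    omega
  have hcard2 : D2.card = Wc.card + Wd.card := by
    rw [hD2eq]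
    have hdisj : Disjoint (Wc.image fun w => ((w, u) : Fin k × Fin k))
        (Wd.image fun w => ((v, w) : Fin k × Fin k)) := by
      rw [Finset.disjoint_left]
      rintro ⟨x, y⟩ h1 h2
      simp only [Finset.mem_image, Prod.mk.injEq] at h1 h2
      obtain ⟨w1, hw1, e1, e2⟩ := h1
      obtain ⟨w2, hw2, e3, e4⟩ := h2
      rw [hWc, Finset.mem_filter] at hw1
      subst e1
      exact absurd (e3 ▸ hw1.2.2.1) (lt_irrefl _)
    rw [Finset.card_union_of_disjoint hdisj,
      Finset.card_image_of_injective _ hinjL2, Finset.card_image_of_injective _ hinjR2]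
  -- partitions
  have hpart1 : Wa.card = Wd.card + M.card := by
    have := Finset.card_filter_add_card_filter_not
      (s := Wa) (p := fun w => σ w < σ v)
    have e1 : Wa.filter (fun w => σ w < σ v) = Wd := by
      apply Finset.ext; intro w
      simp only [hWa, hWd, Finset.mem_filter, Finset.mem_univ, true_and]
      constructor
      · rintro ⟨⟨h1, h2, _⟩, h4⟩; exact ⟨h1, h2, h4⟩
      · rintro ⟨h1, h2, h3⟩; exact ⟨⟨h1, h2, lt_trans h3 hinv⟩, h3⟩
    have e2 : Wa.filter (fun w => ¬ σ w < σ v) = M := by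
      apply Finset.ext; intro w
      simp only [hWa, hM, Finset.mem_filter, Finset.mem_univ, true_and]
      constructor
      · rintro ⟨⟨h1, h2, h3⟩, h4⟩
        have hne2 : σ w ≠ σ v := fun h => (ne_of_lt h2) (σ.injective h)
        exact ⟨h1, h2, lt_of_le_of_ne (not_lt.mp h4) (Ne.symm hne2), h3⟩
      · rintro ⟨h1, h2, h3, h4⟩; exact ⟨⟨h1, h2, h4⟩, not_lt.mpr (le_of_lt h3)⟩
    rw [e1, e2] at this
    omega
  have hpart2 : Wb.card = Wc.card + M.card := by
    have := Finset.card_filter_add_card_filter_not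
      (s := Wb) (p := fun w => σ u < σ w)
    have e1 : Wb.filter (fun w => σ u < σ w) = Wc := by
      apply Finset.ext; intro w
      simp only [hWb, hWc, Finset.mem_filter, Finset.mem_univ, true_and]
      constructor
      · rintro ⟨⟨h1, h2, _⟩, h4⟩; exact ⟨h1, h2, h4⟩
      · rintro ⟨h1, h2, h3⟩; exact ⟨⟨h1, h2, lt_trans hinv h3⟩, h3⟩
    have e2 : Wb.filter (fun w => ¬ σ u < σ w) = M := by
      apply Finset.ext; intro w
      simp only [hWb, hM, Finset.mem_filter, Finset.mem_univ, true_and]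
      constructor
      · rintro ⟨⟨h1, h2, h3⟩, h4⟩
        have hne2 : σ w ≠ σ u := fun h => (ne_of_gt h1) (σ.injective h)
        exact ⟨h1, h2, h3, lt_of_le_of_ne (not_lt.mp h4) hne2⟩
      · rintro ⟨h1, h2, h3, h4⟩; exact ⟨⟨h1, h2, h3⟩, not_lt.mpr (le_of_lt h4)⟩
    rw [e1, e2] at this
    omega
  omega

lemma R_split (π : Equiv.Perm (Fin k)) (p : ℕ) {c q : ℕ} (hcq : c ≤ q) :
    R π p q = R π p c +
      (Finset.univ.filter fun w : Fin k =>
        w.val < p ∧ c ≤ (π w).val ∧ (π w).val < q).card := by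
  have := Finset.card_filter_add_card_filter_not
    (s := Finset.univ.filter fun w : Fin k => w.val < p ∧ (π w).val < q)
    (p := fun w => (π w).val < c)
  rw [Finset.filter_filter, Finset.filter_filter] at this
  have e1 : (Finset.univ.filter fun w : Fin k => (w.val < p ∧ (π w).val < q) ∧ (π w).val < c)
      = Finset.univ.filter fun w : Fin k => w.val < p ∧ (π w).val < c := by
    apply Finset.filter_congr; intro w _; constructor
    · rintro ⟨⟨h1, _⟩, h3⟩; exact ⟨h1, h3⟩
    · rintro ⟨h1, h2⟩; exact ⟨⟨h1, lt_of_lt_of_le h2 hcq⟩, h2⟩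
  have e2 : (Finset.univ.filter fun w : Fin k =>
        (w.val < p ∧ (π w).val < q) ∧ ¬ (π w).val < c)
      = Finset.univ.filter fun w : Fin k => w.val < p ∧ c ≤ (π w).val ∧ (π w).val < q := by
    apply Finset.filter_congr; intro w _; constructor
    · rintro ⟨⟨h1, h2⟩, h3⟩; exact ⟨h1, not_lt.mp h3, h2⟩
    · rintro ⟨h1, h2, h3⟩; exact ⟨⟨h1, h3⟩, not_lt.mpr h2⟩
  rw [e1, e2] at this
  unfold R
  omega

lemma bruhat_lift {τ σ : Equiv.Perm (Fin k)} (hle : BruhatLE τ σ) (hne : τ ≠ σ) :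
    ∃ u v : Fin k, u < v ∧ σ v < σ u ∧ BruhatLE τ (σ * Equiv.swap u v) := by
  classical
  have hR : ∀ p q, R σ p q ≤ R τ p q := (bruhatLE_iff τ σ).mp hle
  have hDne : (Finset.univ.filter fun x : Fin k => σ x ≠ τ x).Nonempty := by
    by_contra h
    rw [Finset.not_nonempty_iff_eq_empty, Finset.filter_eq_empty_iff] at h
    exact hne (Equiv.ext fun x => (not_ne_iff.mp (h (Finset.mem_univ x))).symm)
  set u := Finset.min' _ hDne with hu
  have humem : σ u ≠ τ u := by
    have := Finset.min'_mem _ hDne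
    rw [Finset.mem_filter] at this
    exact this.2
  have hagree : ∀ w : Fin k, w.val < u.val → σ w = τ w := by
    intro w hw
    by_contra hcon
    have : u ≤ w := Finset.min'_le _ w (by rw [Finset.mem_filter]; exact ⟨Finset.mem_univ _, hcon⟩)
    have : u.val ≤ w.val := this
    omega
  have hrow : ∀ q, R σ u.val q = R τ u.val q := by
    intro q
    unfold R
    congr 1
    apply Finset.filter_congr
    intro w _
    by_cases hw : w.val < u.val
    · rw [hagree w hw]
    · simp [hw]
  have hτσu : (τ u).val < (σ u).val := by
    have hind : ∀ q, ((σ u).val < q → (τ u).val < q) := by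
      intro q hq
      have h1 := hR (u.val + 1) q
      rw [R_succ_row, R_succ_row, hrow] at h1
      by_cases h2 : (τ u).val < q
      · exact h2
      · simp [hq, h2] at h1
    have h3 := hind ((σ u).val + 1) (by omega)
    have h4 : (σ u).val ≠ (τ u).val := fun h => humem (Fin.ext h)
    omega
  have hCne : (Finset.univ.filter fun w : Fin k =>
      u < w ∧ (τ u).val ≤ (σ w).val ∧ (σ w).val < (σ u).val).Nonempty := by
    refine ⟨σ.symm (τ u), ?_⟩
    rw [Finset.mem_filter]
    have hw0 : σ (σ.symm (τ u)) = τ u := σ.apply_symm_apply _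
    refine ⟨Finset.mem_univ _, ?_, by rw [hw0], by rw [hw0]; exact hτσu⟩
    have hne0 : σ.symm (τ u) ≠ u := by
      intro h
      rw [h] at hw0
      exact humem hw0
    rcases lt_trichotomy u (σ.symm (τ u)) with h | h | h
    · exact h
    · exact absurd h.symm hne0
    · exfalso
      have := hagree _ h
      rw [hw0] at this
      exact hne0 (τ.injective this.symm)
  set v := Finset.min' _ hCne with hv
  have hvmem := Finset.min'_mem _ hCne
  rw [Finset.mem_filter] at hvmem
  obtain ⟨-, huv, hτuσv, hσvu⟩ := hvmem
  rw [← hv] at huv hτuσv hσvu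
  have hmin : ∀ w : Fin k, u < w → w < v →
      ¬ ((τ u).val ≤ (σ w).val ∧ (σ w).val < (σ u).val) := by
    intro w h1 h2 hcon
    have : v ≤ w := Finset.min'_le _ w (by
      rw [Finset.mem_filter]; exact ⟨Finset.mem_univ _, h1, hcon.1, hcon.2⟩)
    have h3 : v.val ≤ w.val := this
    have h4 : w.val < v.val := h2
    omega
  have hσvult : σ v < σ u := by rw [Fin.lt_def]; exact hσvu
  refine ⟨u, v, huv, hσvult, ?_⟩
  rw [bruhatLE_iff]
  intro p q
  have hsw := R_swap σ huv p q
  by_cases hA : (u.val < p ∧ ¬ v.val < p) ∧ (σ u).val < q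
  · rw [if_pos hA, if_pos ⟨hA.1, lt_trans hσvu hA.2⟩] at hsw
    have := hR p q
    omega
  · rw [if_neg hA] at hsw
    by_cases hB : (u.val < p ∧ ¬ v.val < p) ∧ (σ v).val < q
    · rw [if_pos hB] at hsw
      obtain ⟨hbox, hq2⟩ := hB
      have hq1 : ¬ (σ u).val < q := fun h => hA ⟨hbox, h⟩
      have hkey : R σ p q + 1 ≤ R τ p q := by
        set c := (τ u).val with hc
        have hcq : c ≤ q := by omega
        have hs1 := R_split σ p hcq
        have hs2 := R_split τ p hcq
        have hE1 : (Finset.univ.filter fun w : Fin k =>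
              w.val < p ∧ c ≤ (σ w).val ∧ (σ w).val < q)
            = Finset.univ.filter fun w : Fin k =>
              w.val < u.val ∧ c ≤ (σ w).val ∧ (σ w).val < q := by
          apply Finset.filter_congr
          intro w _
          constructor
          · rintro ⟨h1, h2, h3⟩
            refine ⟨?_, h2, h3⟩
            rcases lt_trichotomy w.val u.val with h | h | h
            · exact h
            · exfalso
              have hwu : w = u := Fin.ext h
              rw [hwu] at h3
              omega
            · exfalso
              have hwv : w < v := by
                rw [Fin.lt_def]
                have : ¬ v.val < p := hbox.2
                omega
              exact hmin w (by rw [Fin.lt_def]; exact h) hwv ⟨h2, by omega⟩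
          · rintro ⟨h1, h2, h3⟩
            have : u.val < p := hbox.1
            exact ⟨by omega, h2, h3⟩
        have hE2 : (Finset.univ.filter fun w : Fin k =>
              w.val < u.val ∧ c ≤ (σ w).val ∧ (σ w).val < q)
            = Finset.univ.filter fun w : Fin k =>
              w.val < u.val ∧ c ≤ (τ w).val ∧ (τ w).val < q := by
          apply Finset.filter_congr
          intro w _
          by_cases hw : w.val < u.val
          · rw [hagree w hw]
          · simp [hw]
        rw [hE1, hE2] at hs1
        have hE3 : (Finset.univ.filter fun w : Fin k =>
              w.val < u.val ∧ c ≤ (τ w).val ∧ (τ w).val < q).card + 1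
            ≤ (Finset.univ.filter fun w : Fin k =>
              w.val < p ∧ c ≤ (τ w).val ∧ (τ w).val < q).card := by
          have hsub : insert u (Finset.univ.filter fun w : Fin k =>
                w.val < u.val ∧ c ≤ (τ w).val ∧ (τ w).val < q)
              ⊆ Finset.univ.filter fun w : Fin k =>
                w.val < p ∧ c ≤ (τ w).val ∧ (τ w).val < q := by
            intro w hw
            rw [Finset.mem_insert] at hw
            rcases hw with rfl | hw
            · rw [Finset.mem_filter]
              exact ⟨Finset.mem_univ _, hbox.1, le_refl _, by omega⟩
            · rw [Finset.mem_filter] at hw ⊢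
              have : u.val < p := hbox.1
              exact ⟨Finset.mem_univ _, by omega, hw.2.2⟩
          have hnm : u ∉ (Finset.univ.filter fun w : Fin k =>
              w.val < u.val ∧ c ≤ (τ w).val ∧ (τ w).val < q) := by
            rw [Finset.mem_filter]
            rintro ⟨-, h, -⟩
            omega
          calc _ = (insert u (Finset.univ.filter fun w : Fin k =>
                w.val < u.val ∧ c ≤ (τ w).val ∧ (τ w).val < q)).card := by
                  rw [Finset.card_insert_of_notMem hnm]
            _ ≤ _ := Finset.card_le_card hsub
        have hbase := hR p c
        omega
      omega
    · rw [if_neg hB] at hsw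
      have := hR p q
      omega


/-! ### Bi-sequence lemmas -/

section BiSeqL

variable {k : ℕ} (A : BiSeq k)

/-- Validity of a permutation w.r.t. a bi-sequence. -/
def Valid (τ : Equiv.Perm (Fin k)) : Prop :=
  ∀ i : Fin k, A.a (τ.symm i) ≤ A.b i + 1

/-- Descent condition for `τ` at positions `u < v`. -/
def StepCond (τ : Equiv.Perm (Fin k)) (u v : Fin k) : Prop :=
  u < v ∧ τ v < τ u ∧ A.a v ≤ A.b (τ u) + 1

variable {A}

lemma valid_sigma0 {σ0 : Equiv.Perm (Fin k)} (hσ0 : Sigma0Spec A σ0) : Valid A σ0 :=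
  fun i => (hσ0 i).1

lemma symm_mul_swap (τ : Equiv.Perm (Fin k)) (u v j : Fin k) :
    (τ * Equiv.swap u v).symm j = Equiv.swap u v (τ.symm j) := by
  rw [Equiv.symm_apply_eq]
  simp [Equiv.Perm.mul_apply, Equiv.swap_apply_self]

lemma valid_swap {τ : Equiv.Perm (Fin k)} {u v : Fin k}
    (hval : Valid A τ) (hsc : StepCond A τ u v) : Valid A (τ * Equiv.swap u v) := by
  obtain ⟨huv, hinv, hav⟩ := hsc
  intro i
  rw [symm_mul_swap]
  by_cases h1 : τ.symm i = u
  · rw [h1, Equiv.swap_apply_left]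
    have : i = τ u := by rw [← h1, Equiv.apply_symm_apply]
    rw [this] at *
    exact hav
  · by_cases h2 : τ.symm i = v
    · rw [h2, Equiv.swap_apply_right]
      have hiv : i = τ v := by rw [← h2, Equiv.apply_symm_apply]
      have h3 : A.a u ≤ A.a v := A.mono_a (le_of_lt huv)
      have h4 : A.b (τ u) ≤ A.b (τ v) := A.anti_b (le_of_lt hinv)
      calc A.a u ≤ A.a v := h3
        _ ≤ A.b (τ u) + 1 := hav
        _ ≤ A.b (τ v) + 1 := by omega
        _ = A.b i + 1 := by rw [← hiv]
    · rw [Equiv.swap_apply_of_ne_of_ne h1 h2]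
      exact hval i

lemma descent_exists {σ0 τ : Equiv.Perm (Fin k)} (hσ0 : Sigma0Spec A σ0)
    (hval : Valid A τ) (hne : τ ≠ σ0) : ∃ u v : Fin k, StepCond A τ u v := by
  classical
  have hDne : (Finset.univ.filter fun i : Fin k => τ.symm i ≠ σ0.symm i).Nonempty := by
    by_contra h
    rw [Finset.not_nonempty_iff_eq_empty, Finset.filter_eq_empty_iff] at h
    apply hne
    have h4 : τ.symm = σ0.symm := Equiv.ext fun j => not_ne_iff.mp (h (Finset.mem_univ j))
    have h5 := congrArg Equiv.symm h4
    simpa using h5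
  set i := Finset.max' _ hDne with hi
  have himem : τ.symm i ≠ σ0.symm i := by
    have := Finset.max'_mem _ hDne
    rw [Finset.mem_filter] at this
    exact this.2
  have habove : ∀ i' : Fin k, i < i' → τ.symm i' = σ0.symm i' := by
    intro i' hi'
    by_contra hcon
    have : i' ≤ i := Finset.le_max' _ i' (by rw [Finset.mem_filter]; exact ⟨Finset.mem_univ _, hcon⟩)
    exact absurd (lt_of_lt_of_le hi' this) (lt_irrefl _)
  set u := τ.symm i with hu
  set v := σ0.symm i with hv
  have hτu : τ u = i := Equiv.apply_symm_apply τ i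
  have hσ0v : σ0 v = i := Equiv.apply_symm_apply σ0 i
  have hule : u ≤ v := by
    apply (hσ0 i).2 u (hval i)
    intro i' hi' hcon
    rw [← habove i' hi'] at hcon
    exact absurd (τ.symm.injective (hcon.trans hu)) (ne_of_gt hi')
  have huv : u < v := lt_of_le_of_ne hule himem
  have hinv : τ v < τ u := by
    rcases lt_trichotomy (τ v) (τ u) with h | h | h
    · exact h
    · exact absurd (τ.injective h) (ne_of_gt huv)
    · exfalso
      rw [hτu] at h
      have h5 := habove (τ v) h
      rw [Equiv.symm_apply_apply] at h5
      have h6 : τ v = i := σ0.symm.injective (h5.symm.trans hv)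
      have h7 : v = u := by rw [hu, ← h6, Equiv.symm_apply_apply]
      exact himem h7.symm
  refine ⟨u, v, huv, hinv, ?_⟩
  rw [hτu]
  exact (hσ0 i).1

lemma len_lt_of_stepCond {τ : Equiv.Perm (Fin k)} {u v : Fin k}
    (hsc : StepCond A τ u v) : lenPerm (τ * Equiv.swap u v) < lenPerm τ := by
  have := BMS.len_swap τ hsc.1 hsc.2.1
  omega

lemma sigma0_min_aux {σ0 : Equiv.Perm (Fin k)} (hσ0 : Sigma0Spec A σ0) :
    ∀ n (τ : Equiv.Perm (Fin k)), lenPerm τ ≤ n → Valid A τ →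
      BruhatLE σ0 τ ∧ lenPerm σ0 ≤ lenPerm τ := by
  intro n
  induction n with
  | zero =>
    intro τ hlen hval
    by_cases h : τ = σ0
    · subst h; exact ⟨BMS.bruhatLE_refl _, le_refl _⟩
    · obtain ⟨u, v, hsc⟩ := descent_exists hσ0 hval h
      have := len_lt_of_stepCond hsc
      omega
  | succ n ih =>
    intro τ hlen hval
    by_cases h : τ = σ0
    · subst h; exact ⟨BMS.bruhatLE_refl _, le_refl _⟩
    · obtain ⟨u, v, hsc⟩ := descent_exists hσ0 hval h
      have hlt := len_lt_of_stepCond hsc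
      have hval' := valid_swap hval hsc
      obtain ⟨h1, h2⟩ := ih (τ * Equiv.swap u v) (by omega) hval'
      refine ⟨BMS.bruhatLE_trans h1 (BMS.swap_le τ hsc.1 hsc.2.1), by omega⟩

lemma sigma0_min {σ0 τ : Equiv.Perm (Fin k)} (hσ0 : Sigma0Spec A σ0) (hval : Valid A τ) :
    BruhatLE σ0 τ :=
  (sigma0_min_aux hσ0 (lenPerm τ) τ le_rfl hval).1

lemma sigma0_len_le {σ0 τ : Equiv.Perm (Fin k)} (hσ0 : Sigma0Spec A σ0) (hval : Valid A τ) :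
    lenPerm σ0 ≤ lenPerm τ :=
  (sigma0_min_aux hσ0 (lenPerm τ) τ le_rfl hval).2

/-- The bound position `c_i`. -/
noncomputable def cFin (A : BiSeq k) (i : Fin k) : Fin k :=
  Finset.max' (Finset.univ.filter fun p : Fin k => A.a p ≤ A.b i + 1)
    ⟨i.rev, by rw [Finset.mem_filter]; exact ⟨Finset.mem_univ _, A.compat i⟩⟩

lemma cFin_spec (i : Fin k) : ∀ p : Fin k, A.a p ≤ A.b i + 1 ↔ p ≤ cFin A i := by
  intro p
  constructor
  · intro h
    exact Finset.le_max' _ p (by rw [Finset.mem_filter]; exact ⟨Finset.mem_univ _, h⟩)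
  · intro h
    have hmem := Finset.max'_mem (Finset.univ.filter fun p : Fin k => A.a p ≤ A.b i + 1)
      ⟨i.rev, by rw [Finset.mem_filter]; exact ⟨Finset.mem_univ _, A.compat i⟩⟩
    rw [Finset.mem_filter] at hmem
    calc A.a p ≤ A.a (cFin A i) := A.mono_a h
      _ ≤ A.b i + 1 := hmem.2

lemma cFin_anti {i j : Fin k} (hij : i ≤ j) : cFin A j ≤ cFin A i := by
  rw [← cFin_spec]
  calc A.a (cFin A j) ≤ A.b j + 1 := by rw [cFin_spec]
    _ ≤ A.b i + 1 := by have := A.anti_b hij; omega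

lemma valid_iff_c (τ : Equiv.Perm (Fin k)) :
    Valid A τ ↔ ∀ i : Fin k, τ.symm i ≤ cFin A i := by
  unfold Valid
  constructor
  · intro h i; rw [← cFin_spec]; exact h i
  · intro h i; rw [cFin_spec]; exact h i

lemma card_val_lt (m : ℕ) (hm : m ≤ k) :
    (Finset.univ.filter fun j : Fin k => j.val < m).card = m := by
  have h : (Finset.univ.filter fun j : Fin k => j.val < m).card = (Finset.range m).card := by
    apply Finset.card_bij (fun j _ => j.val)
    · intro j hj
      rw [Finset.mem_filter] at hj
      rw [Finset.mem_range]
      exact hj.2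
    · intro a ha b hb h
      exact Fin.ext h
    · intro b hb
      rw [Finset.mem_range] at hb
      exact ⟨⟨b, lt_of_lt_of_le hb hm⟩,
        by rw [Finset.mem_filter]; exact ⟨Finset.mem_univ _, hb⟩, rfl⟩
  rw [h, Finset.card_range]

lemma card_val_ge (π : Equiv.Perm (Fin k)) (i : Fin k) :
    (Finset.univ.filter fun p : Fin k => i.val ≤ (π p).val).card = k - i.val := by
  have h1 : (Finset.univ.filter fun p : Fin k => i.val ≤ (π p).val).card
      = (Finset.univ.filter fun j : Fin k => i.val ≤ j.val).card := by
    apply Finset.card_bij (fun p _ => π p)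
    · intro p hp
      rw [Finset.mem_filter] at hp ⊢
      exact ⟨Finset.mem_univ _, hp.2⟩
    · intro a _ b _ h
      exact π.injective h
    · intro j hj
      rw [Finset.mem_filter] at hj
      exact ⟨π.symm j, by
        rw [Finset.mem_filter, π.apply_symm_apply]
        exact ⟨Finset.mem_univ _, hj.2⟩, π.apply_symm_apply j⟩
  rw [h1]
  have h2 := Finset.card_filter_add_card_filter_not
    (s := (Finset.univ : Finset (Fin k))) (p := fun j : Fin k => i.val ≤ j.val)
  have h3 : (Finset.univ.filter fun j : Fin k => ¬ i.val ≤ j.val).card = i.val := by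
    rw [show (Finset.univ.filter fun j : Fin k => ¬ i.val ≤ j.val)
      = (Finset.univ.filter fun j : Fin k => j.val < i.val) from
      Finset.filter_congr fun j _ => by omega]
    exact card_val_lt i.val (le_of_lt i.isLt)
  rw [Finset.card_univ, Fintype.card_fin] at h2
  omega

lemma R_split_at (π : Equiv.Perm (Fin k)) (m : ℕ) (i : Fin k) (hm : m ≤ k) :
    R π m i.val + (Finset.univ.filter fun p : Fin k =>
      p.val < m ∧ i.val ≤ (π p).val).card = m := by
  have h2 := Finset.card_filter_add_card_filter_not
    (s := Finset.univ.filter fun p : Fin k => p.val < m)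
    (p := fun p : Fin k => (π p).val < i.val)
  rw [Finset.filter_filter, Finset.filter_filter] at h2
  have e2 : (Finset.univ.filter fun p : Fin k => p.val < m ∧ ¬ (π p).val < i.val)
      = Finset.univ.filter fun p : Fin k => p.val < m ∧ i.val ≤ (π p).val :=
    Finset.filter_congr fun p _ => by omega
  rw [e2, card_val_lt m hm] at h2
  unfold R
  omega

lemma valid_iff_rank (τ : Equiv.Perm (Fin k)) :
    Valid A τ ↔ ∀ i : Fin k,
      R τ ((cFin A i).val + 1) i.val + (k - i.val) ≤ (cFin A i).val + 1 := by
  rw [valid_iff_c]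
  constructor
  · intro h i
    have hm : (cFin A i).val + 1 ≤ k := (cFin A i).isLt
    have hsplit := R_split_at τ ((cFin A i).val + 1) i hm
    have hinj : (Finset.univ.filter fun j : Fin k => i.val ≤ j.val).card ≤
        (Finset.univ.filter fun p : Fin k =>
          p.val < (cFin A i).val + 1 ∧ i.val ≤ (τ p).val).card := by
      apply Finset.card_le_card_of_injOn (fun j => τ.symm j)
      · intro j hj
        rw [Finset.mem_coe, Finset.mem_filter] at hj ⊢
        refine ⟨Finset.mem_univ _, ?_, ?_⟩
        · have h4 : τ.symm j ≤ cFin A j := h j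
          have h5 : cFin A j ≤ cFin A i := cFin_anti (A := A) (by
            rw [Fin.le_def]; exact hj.2)
          have h6 : (τ.symm j).val ≤ (cFin A i).val := le_trans h4 h5
          exact Nat.lt_succ_of_le h6
        · rw [τ.apply_symm_apply]
          exact hj.2
      · intro a _ b _ hab
        exact τ.symm.injective hab
    have hcnt : (Finset.univ.filter fun j : Fin k => i.val ≤ j.val).card = k - i.val := by
      have := card_val_ge (Equiv.refl (Fin k)) i
      simpa using this
    omega
  · intro h i
    have hm : (cFin A i).val + 1 ≤ k := (cFin A i).isLt
    have hsplit := R_split_at τ ((cFin A i).val + 1) i hm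
    have hsub : (Finset.univ.filter fun p : Fin k =>
          p.val < (cFin A i).val + 1 ∧ i.val ≤ (τ p).val)
        ⊆ Finset.univ.filter fun p : Fin k => i.val ≤ (τ p).val := by
      intro p hp
      rw [Finset.mem_filter] at hp ⊢
      exact ⟨Finset.mem_univ _, hp.2.2⟩
    have hcard := card_val_ge τ i
    have heq : (Finset.univ.filter fun p : Fin k => i.val ≤ (τ p).val)
        = Finset.univ.filter fun p : Fin k =>
          p.val < (cFin A i).val + 1 ∧ i.val ≤ (τ p).val := by
      apply (Finset.eq_of_subset_of_card_le hsub ?_).symm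
      have := h i
      omega
    have hmem : τ.symm i ∈ Finset.univ.filter fun p : Fin k => i.val ≤ (τ p).val := by
      rw [Finset.mem_filter, τ.apply_symm_apply]
      exact ⟨Finset.mem_univ _, le_refl _⟩
    rw [heq, Finset.mem_filter] at hmem
    rw [Fin.le_def]
    omega

/-- Upward closure: anything Bruhat-above `σ0` is valid. -/
lemma valid_of_le {σ0 τ : Equiv.Perm (Fin k)} (hσ0 : Sigma0Spec A σ0)
    (hle : BruhatLE σ0 τ) : Valid A τ := by
  rw [valid_iff_rank]
  intro i
  have h1 := (valid_iff_rank (A := A) σ0).mp (valid_sigma0 hσ0) i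
  have h2 := (BMS.bruhatLE_iff σ0 τ).mp hle ((cFin A i).val + 1) i.val
  omega

/-- A descent with unit length drop exists whenever a descent exists. -/
lemma descent_unit {τ : Equiv.Perm (Fin k)} :
    ∀ (g : ℕ) (u v : Fin k), v.val - u.val ≤ g → StepCond A τ u v →
      ∃ u' v', StepCond A τ u' v' ∧ lenPerm (τ * Equiv.swap u' v') + 1 = lenPerm τ := by
  intro g
  induction g with
  | zero =>
    intro u v hg hsc
    have : u.val < v.val := hsc.1
    omega
  | succ g ih =>
    intro u v hg hsc
    obtain ⟨huv, hinv, hav⟩ := hsc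
    by_cases hM : (Finset.univ.filter fun w : Fin k =>
        u < w ∧ w < v ∧ τ v < τ w ∧ τ w < τ u) = ∅
    · refine ⟨u, v, ⟨huv, hinv, hav⟩, ?_⟩
      have := BMS.len_swap τ huv hinv
      rw [hM] at this
      simpa using this
    · obtain ⟨w, hw⟩ := Finset.nonempty_of_ne_empty hM
      rw [Finset.mem_filter] at hw
      obtain ⟨-, huw, hwv, hτvw, hτwu⟩ := hw
      have hsc' : StepCond A τ u w := by
        refine ⟨huw, hτwu, ?_⟩
        calc A.a w ≤ A.a v := A.mono_a (le_of_lt hwv)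
          _ ≤ A.b (τ u) + 1 := hav
      have : w.val - u.val ≤ g := by
        have h1 : u.val < w.val := huw
        have h2 : w.val < v.val := hwv
        omega
      exact ih u w this hsc'

end BiSeqL

/-! ### Multisegment lemmas -/

section MSegL

variable {k : ℕ} {A : BiSeq k}

lemma Segment.ext' {s t : Segment} (ha : s.a = t.a) (hb : s.b = t.b) : s = t := by
  cases s; cases t; simp_all

/-- Total version of the segment assignment. -/
noncomputable def sg (A : BiSeq k) (τ : Equiv.Perm (Fin k)) (i : Fin k) : Segment :=
  if h : A.a (τ.symm i) ≤ A.b i then ⟨A.a (τ.symm i), A.b i, h⟩ else ⟨0, 0, le_refl 0⟩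

/-- The set of indices with nonempty segment. -/
def FS (A : BiSeq k) (τ : Equiv.Perm (Fin k)) : Finset (Fin k) :=
  Finset.univ.filter fun i => A.a (τ.symm i) ≤ A.b i

lemma mem_FS {τ : Equiv.Perm (Fin k)} {i : Fin k} :
    i ∈ FS A τ ↔ A.a (τ.symm i) ≤ A.b i := by
  rw [FS, Finset.mem_filter]
  simp

lemma sg_a {τ : Equiv.Perm (Fin k)} {i : Fin k} (h : i ∈ FS A τ) :
    (sg A τ i).a = A.a (τ.symm i) := by
  rw [mem_FS] at h
  rw [sg, dif_pos h]

lemma sg_b {τ : Equiv.Perm (Fin k)} {i : Fin k} (h : i ∈ FS A τ) :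
    (sg A τ i).b = A.b i := by
  rw [mem_FS] at h
  rw [sg, dif_pos h]

lemma mOf_eq (τ : Equiv.Perm (Fin k)) :
    mOf A τ = (FS A τ).val.map (sg A τ) := by
  have h0 : (FS A τ).val.map (sg A τ)
      = (FS A τ).attach.val.map (fun i => sg A τ i.1) := by
    conv_lhs => rw [← Multiset.attach_map_val (FS A τ).val]
    rw [Multiset.map_map]
    rfl
  rw [h0]
  unfold mOf
  exact Multiset.map_congr rfl fun x hx => by
    rw [sg, dif_pos (mem_FS.mp x.2)]

lemma mem_mOf {τ : Equiv.Perm (Fin k)} {Δ : Segment} :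
    Δ ∈ mOf A τ ↔ ∃ i ∈ FS A τ, sg A τ i = Δ := by
  rw [mOf_eq, Multiset.mem_map]
  constructor
  · rintro ⟨i, hi, h⟩; exact ⟨i, hi, h⟩
  · rintro ⟨i, hi, h⟩; exact ⟨i, hi, h⟩

lemma sg_injOn (hA : RegularBS A) (τ : Equiv.Perm (Fin k)) {i j : Fin k}
    (hi : i ∈ FS A τ) (hj : j ∈ FS A τ) (h : sg A τ i = sg A τ j) : i = j := by
  have := congrArg Segment.b h
  rw [sg_b hi, sg_b hj] at this
  exact hA.2.injective this

lemma mOf_nodup (hA : RegularBS A) (τ : Equiv.Perm (Fin k)) : (mOf A τ).Nodup := by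
  rw [mOf_eq]
  apply Multiset.Nodup.map_on
  · intro x hx y hy h
    exact sg_injOn hA τ hx hy h
  · exact (FS A τ).nodup

lemma mOf_regular (hA : RegularBS A) (τ : Equiv.Perm (Fin k)) : Regular (mOf A τ) := by
  constructor
  · rw [mOf_eq, Multiset.map_map]
    apply Multiset.Nodup.map_on
    · intro x hx y hy h
      simp only [Function.comp_apply] at h
      rw [sg_a hx, sg_a hy] at h
      exact τ.symm.injective (hA.1.injective h)
    · exact (FS A τ).nodup
  · rw [mOf_eq, Multiset.map_map]
    apply Multiset.Nodup.map_on
    · intro x hx y hy h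
      simp only [Function.comp_apply] at h
      rw [sg_b hx, sg_b hy] at h
      exact hA.2.injective h
    · exact (FS A τ).nodup

lemma map_val_decomp (F : Finset (Fin k)) (f : Fin k → Segment) {i : Fin k} (hi : i ∈ F) :
    F.val.map f = f i ::ₘ (F.erase i).val.map f := by
  conv_lhs => rw [← Multiset.cons_erase (show i ∈ F.val from hi)]
  rw [Multiset.map_cons]
  congr 1

lemma mOf_decomp1 {τ : Equiv.Perm (Fin k)} {i : Fin k} (hi : i ∈ FS A τ) :
    mOf A τ = sg A τ i ::ₘ ((FS A τ).erase i).val.map (sg A τ) := by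
  rw [mOf_eq]
  exact map_val_decomp _ _ hi

lemma mOf_decomp2 {τ : Equiv.Perm (Fin k)} {i j : Fin k} (hj : j ∈ FS A τ)
    (hi : i ∈ FS A τ) (hij : i ≠ j) :
    mOf A τ = sg A τ j ::ₘ sg A τ i ::ₘ (((FS A τ).erase j).erase i).val.map (sg A τ) := by
  rw [mOf_decomp1 hj]
  congr 1
  exact map_val_decomp _ _ (Finset.mem_erase.mpr ⟨hij, hi⟩)

/-! Facts about a step condition. -/

section StepFacts

variable {τ : Equiv.Perm (Fin k)} {u v : Fin k}

lemma sc_symm_i (hsc : StepCond A τ u v) : τ.symm (τ v) = v := Equiv.symm_apply_apply τ v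

lemma sc_symm_j (hsc : StepCond A τ u v) : τ.symm (τ u) = u := Equiv.symm_apply_apply τ u

lemma sc_auv (hA : RegularBS A) (hsc : StepCond A τ u v) : A.a u < A.a v := hA.1 hsc.1

lemma sc_bij (hA : RegularBS A) (hsc : StepCond A τ u v) :
    A.b (τ u) < A.b (τ v) := hA.2 hsc.2.1

lemma sc_j_mem (hA : RegularBS A) (hsc : StepCond A τ u v) : τ u ∈ FS A τ := by
  rw [mem_FS, sc_symm_j hsc]
  have h1 := sc_auv hA hsc
  have h2 := hsc.2.2
  omega

lemma sc_i_mem (hA : RegularBS A) (hsc : StepCond A τ u v) : τ v ∈ FS A τ := by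
  rw [mem_FS, sc_symm_i hsc]
  have h1 := hsc.2.2
  have h2 := sc_bij hA hsc
  omega

lemma sc_symm_i' (hsc : StepCond A τ u v) : (τ * Equiv.swap u v).symm (τ v) = u := by
  rw [symm_mul_swap, sc_symm_i hsc, Equiv.swap_apply_right]

lemma sc_symm_j' (hsc : StepCond A τ u v) : (τ * Equiv.swap u v).symm (τ u) = v := by
  rw [symm_mul_swap, sc_symm_j hsc, Equiv.swap_apply_left]

lemma sc_i_mem' (hA : RegularBS A) (hsc : StepCond A τ u v) :
    τ v ∈ FS A (τ * Equiv.swap u v) := by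
  rw [mem_FS, sc_symm_i' hsc]
  have h1 := sc_auv hA hsc
  have h2 := hsc.2.2
  have h3 := sc_bij hA hsc
  omega

lemma sc_j_mem' (hsc : StepCond A τ u v) (h : A.a v ≤ A.b (τ u)) :
    τ u ∈ FS A (τ * Equiv.swap u v) := by
  rw [mem_FS, sc_symm_j' hsc]
  exact h

lemma sc_j_nmem' (hsc : StepCond A τ u v) (h : ¬ A.a v ≤ A.b (τ u)) :
    τ u ∉ FS A (τ * Equiv.swap u v) := by
  rw [mem_FS, sc_symm_j' hsc]
  exact h

lemma sc_other (hsc : StepCond A τ u v) {l : Fin k} (h1 : l ≠ τ u) (h2 : l ≠ τ v) :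
    (τ * Equiv.swap u v).symm l = τ.symm l := by
  rw [symm_mul_swap]
  apply Equiv.swap_apply_of_ne_of_ne
  · intro h
    apply h1
    rw [← Equiv.apply_symm_apply τ l, h]
  · intro h
    apply h2
    rw [← Equiv.apply_symm_apply τ l, h]

lemma sc_other_sg (hsc : StepCond A τ u v) {l : Fin k} (h1 : l ≠ τ u) (h2 : l ≠ τ v) :
    sg A (τ * Equiv.swap u v) l = sg A τ l := by
  unfold sg
  rw [sc_other hsc h1 h2]

lemma sc_other_mem (hsc : StepCond A τ u v) {l : Fin k} (h1 : l ≠ τ u) (h2 : l ≠ τ v) :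
    (l ∈ FS A (τ * Equiv.swap u v) ↔ l ∈ FS A τ) := by
  rw [mem_FS, mem_FS, sc_other hsc h1 h2]

lemma sc_rest_eq (hsc : StepCond A τ u v) :
    (((FS A (τ * Equiv.swap u v)).erase (τ u)).erase (τ v)).val.map
      (sg A (τ * Equiv.swap u v))
    = (((FS A τ).erase (τ u)).erase (τ v)).val.map (sg A τ) := by
  have hset : ((FS A (τ * Equiv.swap u v)).erase (τ u)).erase (τ v)
      = ((FS A τ).erase (τ u)).erase (τ v) := by
    apply Finset.ext
    intro l
    rw [Finset.mem_erase, Finset.mem_erase, Finset.mem_erase, Finset.mem_erase]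
    constructor
    · rintro ⟨h2, h1, h3⟩
      exact ⟨h2, h1, (sc_other_mem hsc h1 h2).mp h3⟩
    · rintro ⟨h2, h1, h3⟩
      exact ⟨h2, h1, (sc_other_mem hsc h1 h2).mpr h3⟩
  rw [hset]
  apply Multiset.map_congr rfl
  intro l hl
  rw [← Finset.mem_def, Finset.mem_erase, Finset.mem_erase] at hl
  exact sc_other_sg hsc hl.2.1 hl.1

lemma sc_ij_ne (hsc : StepCond A τ u v) : τ v ≠ τ u := ne_of_lt hsc.2.1

/-- Decomposition of `m_τ` at the two segments involved. -/
lemma sc_mOf_decomp (hA : RegularBS A) (hsc : StepCond A τ u v) :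
    mOf A τ = sg A τ (τ u) ::ₘ sg A τ (τ v) ::ₘ
      (((FS A τ).erase (τ u)).erase (τ v)).val.map (sg A τ) :=
  mOf_decomp2 (sc_j_mem hA hsc) (sc_i_mem hA hsc) (sc_ij_ne hsc)

/-- Pair case: decomposition of `m_{τ(uv)}`. -/
lemma sc_mOf_decomp_pair (hA : RegularBS A) (hsc : StepCond A τ u v)
    (h : A.a v ≤ A.b (τ u)) :
    mOf A (τ * Equiv.swap u v) = sg A (τ * Equiv.swap u v) (τ v) ::ₘ
      sg A (τ * Equiv.swap u v) (τ u) ::ₘ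
      (((FS A τ).erase (τ u)).erase (τ v)).val.map (sg A τ) := by
  rw [mOf_decomp2 (A := A) (sc_i_mem' hA hsc) (sc_j_mem' hsc h) (Ne.symm (sc_ij_ne hsc))]
  rw [show ((FS A (τ * Equiv.swap u v)).erase (τ v)).erase (τ u)
      = ((FS A (τ * Equiv.swap u v)).erase (τ u)).erase (τ v) from Finset.erase_right_comm]
  rw [sc_rest_eq hsc]

/-- Merge case: decomposition of `m_{τ(uv)}`. -/
lemma sc_mOf_decomp_merge (hA : RegularBS A) (hsc : StepCond A τ u v)
    (h : ¬ A.a v ≤ A.b (τ u)) :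
    mOf A (τ * Equiv.swap u v) = sg A (τ * Equiv.swap u v) (τ v) ::ₘ
      (((FS A τ).erase (τ u)).erase (τ v)).val.map (sg A τ) := by
  rw [mOf_decomp1 (A := A) (sc_i_mem' hA hsc)]
  rw [show (FS A (τ * Equiv.swap u v)).erase (τ v)
      = ((FS A (τ * Equiv.swap u v)).erase (τ u)).erase (τ v) from by
    rw [Finset.erase_eq_of_notMem (sc_j_nmem' hsc h)]]
  rw [sc_rest_eq hsc]

lemma sc_sg_j_a (hA : RegularBS A) (hsc : StepCond A τ u v) :
    (sg A τ (τ u)).a = A.a u := by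
  rw [sg_a (sc_j_mem hA hsc), sc_symm_j hsc]

lemma sc_sg_j_b (hA : RegularBS A) (hsc : StepCond A τ u v) :
    (sg A τ (τ u)).b = A.b (τ u) := sg_b (sc_j_mem hA hsc)

lemma sc_sg_i_a (hA : RegularBS A) (hsc : StepCond A τ u v) :
    (sg A τ (τ v)).a = A.a v := by
  rw [sg_a (sc_i_mem hA hsc), sc_symm_i hsc]

lemma sc_sg_i_b (hA : RegularBS A) (hsc : StepCond A τ u v) :
    (sg A τ (τ v)).b = A.b (τ v) := sg_b (sc_i_mem hA hsc)

lemma sc_sg_i'_a (hA : RegularBS A) (hsc : StepCond A τ u v) :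
    (sg A (τ * Equiv.swap u v) (τ v)).a = A.a u := by
  rw [sg_a (sc_i_mem' hA hsc), sc_symm_i' hsc]

lemma sc_sg_i'_b (hA : RegularBS A) (hsc : StepCond A τ u v) :
    (sg A (τ * Equiv.swap u v) (τ v)).b = A.b (τ v) :=
  sg_b (sc_i_mem' hA hsc)

lemma sc_sg_j'_a (hsc : StepCond A τ u v) (h : A.a v ≤ A.b (τ u)) :
    (sg A (τ * Equiv.swap u v) (τ u)).a = A.a v := by
  rw [sg_a (sc_j_mem' hsc h), sc_symm_j' hsc]

lemma sc_sg_j'_b (hsc : StepCond A τ u v) (h : A.a v ≤ A.b (τ u)) :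
    (sg A (τ * Equiv.swap u v) (τ u)).b = A.b (τ u) := sg_b (sc_j_mem' hsc h)

lemma sc_prec (hA : RegularBS A) (hsc : StepCond A τ u v) :
    Segment.prec (sg A τ (τ u)) (sg A τ (τ v)) := by
  refine ⟨?_, ?_, ?_⟩
  · rw [sc_sg_j_a hA hsc, sc_sg_i_a hA hsc]
    exact sc_auv hA hsc
  · rw [sc_sg_i_a hA hsc, sc_sg_j_b hA hsc]
    exact hsc.2.2
  · rw [sc_sg_j_b hA hsc, sc_sg_i_b hA hsc]
    exact sc_bij hA hsc

/-- Forward direction: a step condition produces a `Step`. -/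
lemma sc_step (hA : RegularBS A) (hsc : StepCond A τ u v) :
    Step (mOf A (τ * Equiv.swap u v)) (mOf A τ) := by
  refine ⟨sg A τ (τ u), sg A τ (τ v),
    (((FS A τ).erase (τ u)).erase (τ v)).val.map (sg A τ),
    sc_prec hA hsc, sc_mOf_decomp hA hsc, ?_⟩
  by_cases h : A.a v ≤ A.b (τ u)
  · left
    refine ⟨?_, sg A (τ * Equiv.swap u v) (τ v), sg A (τ * Equiv.swap u v) (τ u),
      ?_, ?_, ?_, ?_, sc_mOf_decomp_pair hA hsc h⟩
    · rw [sc_sg_i_a hA hsc, sc_sg_j_b hA hsc]; exact h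
    · rw [sc_sg_i'_a hA hsc, sc_sg_j_a hA hsc]
    · rw [sc_sg_i'_b hA hsc, sc_sg_i_b hA hsc]
    · rw [sc_sg_j'_a hsc h, sc_sg_i_a hA hsc]
    · rw [sc_sg_j'_b hsc h, sc_sg_j_b hA hsc]
  · right
    have h2 := hsc.2.2
    refine ⟨?_, sg A (τ * Equiv.swap u v) (τ v), ?_, ?_, sc_mOf_decomp_merge hA hsc h⟩
    · rw [sc_sg_i_a hA hsc, sc_sg_j_b hA hsc]; omega
    · rw [sc_sg_i'_a hA hsc, sc_sg_j_a hA hsc]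
    · rw [sc_sg_i'_b hA hsc, sc_sg_i_b hA hsc]

end StepFacts

/-- Extract a step condition from a linked pair (`prec` order). -/
lemma prec_to_sc (hA : RegularBS A) {τ : Equiv.Perm (Fin k)} {Δ Δ' : Segment}
    {r : Multiset Segment} (heq : mOf A τ = Δ ::ₘ Δ' ::ₘ r)
    (hprec : Segment.prec Δ Δ') :
    ∃ u v : Fin k, StepCond A τ u v ∧ Δ = sg A τ (τ u) ∧ Δ' = sg A τ (τ v) := by
  have hΔ : Δ ∈ mOf A τ := by rw [heq]; exact Multiset.mem_cons_self _ _
  have hΔ' : Δ' ∈ mOf A τ := by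
    rw [heq]
    exact Multiset.mem_cons_of_mem (Multiset.mem_cons_self _ _)
  rw [mem_mOf] at hΔ hΔ'
  obtain ⟨j, hj, hjeq⟩ := hΔ
  obtain ⟨i, hi, hieq⟩ := hΔ'
  obtain ⟨hp1, hp2, hp3⟩ := hprec
  rw [← hjeq, ← hieq] at hp1 hp2 hp3
  rw [sg_a hj, sg_a hi] at hp1
  rw [sg_a hi, sg_b hj] at hp2
  rw [sg_b hj, sg_b hi] at hp3
  have hij : i < j := hA.2.lt_iff_gt.mp hp3
  have huv : τ.symm j < τ.symm i := hA.1.lt_iff_lt.mp hp1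
  refine ⟨τ.symm j, τ.symm i, ⟨huv, ?_, ?_⟩, ?_, ?_⟩
  · rw [Equiv.apply_symm_apply, Equiv.apply_symm_apply]
    exact hij
  · rw [Equiv.apply_symm_apply]
    exact hp2
  · rw [Equiv.apply_symm_apply]
    exact hjeq.symm
  · rw [Equiv.apply_symm_apply]
    exact hieq.symm

/-- Backward direction: every `Step` out of `m_τ` comes from a step condition. -/
lemma step_to_sc (hA : RegularBS A) {τ : Equiv.Perm (Fin k)} {m' : Multisegment}
    (hstep : Step m' (mOf A τ)) :
    ∃ u v : Fin k, StepCond A τ u v ∧ m' = mOf A (τ * Equiv.swap u v) := by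
  obtain ⟨Δ, Δ', r, hprec, heq, hcase⟩ := hstep
  obtain ⟨u, v, hsc, hΔ, hΔ'⟩ := prec_to_sc hA heq hprec
  refine ⟨u, v, hsc, ?_⟩
  have hdec := sc_mOf_decomp hA hsc
  rw [heq, hΔ, hΔ'] at hdec
  have hr : r = (((FS A τ).erase (τ u)).erase (τ v)).val.map (sg A τ) := by
    have h1 := (Multiset.cons_inj_right _).mp hdec
    exact (Multiset.cons_inj_right _).mp h1
  rcases hcase with ⟨hle, E, F, hEa, hEb, hFa, hFb, hm'⟩ | ⟨hmerge, E, hEa, hEb, hm'⟩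
  · have hle' : A.a v ≤ A.b (τ u) := by
      rw [hΔ', hΔ, sc_sg_i_a hA hsc, sc_sg_j_b hA hsc] at hle
      exact hle
    rw [hm', hr, sc_mOf_decomp_pair hA hsc hle']
    congr 1
    · apply Segment.ext'
      · rw [hEa, hΔ, sc_sg_j_a hA hsc, sc_sg_i'_a hA hsc]
      · rw [hEb, hΔ', sc_sg_i_b hA hsc, sc_sg_i'_b hA hsc]
    congr 1
    apply Segment.ext'
    · rw [hFa, hΔ', sc_sg_i_a hA hsc, sc_sg_j'_a hsc hle']
    · rw [hFb, hΔ, sc_sg_j_b hA hsc, sc_sg_j'_b hsc hle']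
  · have hmerge' : ¬ A.a v ≤ A.b (τ u) := by
      rw [hΔ', hΔ, sc_sg_i_a hA hsc, sc_sg_j_b hA hsc] at hmerge
      omega
    rw [hm', hr, sc_mOf_decomp_merge hA hsc hmerge']
    congr 1
    apply Segment.ext'
    · rw [hEa, hΔ, sc_sg_j_a hA hsc, sc_sg_i'_a hA hsc]
    · rw [hEb, hΔ', sc_sg_i_b hA hsc, sc_sg_i'_b hA hsc]

end MSegL

/-! ### Assembly -/

section Assemble

variable {k : ℕ} {A : BiSeq k}

lemma pu_sigma0 (hA : RegularBS A) {σ0 : Equiv.Perm (Fin k)} (hσ0 : Sigma0Spec A σ0) :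
    PairwiseUnlinked (mOf A σ0) := by
  have key : ∀ (Δ₁ Δ₂ : Segment) (r₁ : Multiset Segment),
      mOf A σ0 = Δ₁ ::ₘ Δ₂ ::ₘ r₁ → ¬ Segment.prec Δ₁ Δ₂ := by
    intro Δ₁ Δ₂ r₁ heq₁ hp
    obtain ⟨u, v, hsc, -, -⟩ := prec_to_sc hA heq₁ hp
    have hval' := valid_swap (valid_sigma0 hσ0) hsc
    have hle1 : BruhatLE (σ0 * Equiv.swap u v) σ0 := swap_le σ0 hsc.1 hsc.2.1
    have hle2 : BruhatLE σ0 (σ0 * Equiv.swap u v) := sigma0_min hσ0 hval'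
    have heqp := bruhatLE_antisymm hle2 hle1
    have h2 := congrArg (fun π : Equiv.Perm (Fin k) => π u) heqp
    simp only [Equiv.Perm.mul_apply, Equiv.swap_apply_left] at h2
    exact absurd (σ0.injective h2) (ne_of_lt hsc.1)
  intro Δ Δ' r heq hlink
  rcases hlink with hp | hp
  · exact key Δ Δ' r heq hp
  · apply key Δ' Δ r _ hp
    rw [Multiset.cons_swap]
    exact heq

lemma not_pu (hA : RegularBS A) {σ0 τ : Equiv.Perm (Fin k)} (hσ0 : Sigma0Spec A σ0)
    (hval : Valid A τ) (hne : τ ≠ σ0) : ¬ PairwiseUnlinked (mOf A τ) := by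
  obtain ⟨u, v, hsc⟩ := descent_exists hσ0 hval hne
  intro hpu
  exact hpu _ _ _ (sc_mOf_decomp hA hsc) (Or.inl (sc_prec hA hsc))

lemma mOf_inj (hA : RegularBS A) {τ τ' : Equiv.Perm (Fin k)} (hv : Valid A τ)
    (hv' : Valid A τ') (heq : mOf A τ = mOf A τ') : τ = τ' := by
  have key : ∀ (π π' : Equiv.Perm (Fin k)), mOf A π = mOf A π' → ∀ i, i ∈ FS A π →
      i ∈ FS A π' ∧ A.a (π.symm i) = A.a (π'.symm i) := by
    intro π π' he i hi
    have hmem : sg A π i ∈ mOf A π' := by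
      rw [← he]
      exact mem_mOf.mpr ⟨i, hi, rfl⟩
    rw [mem_mOf] at hmem
    obtain ⟨i₂, hi₂, he₂⟩ := hmem
    have hb := congrArg Segment.b he₂
    rw [sg_b hi₂, sg_b hi] at hb
    have hii : i₂ = i := hA.2.injective hb
    subst hii
    have ha := congrArg Segment.a he₂
    rw [sg_a hi₂, sg_a hi] at ha
    exact ⟨hi₂, ha.symm⟩
  have hsymm : ∀ i, τ.symm i = τ'.symm i := by
    intro i
    by_cases hi : i ∈ FS A τ
    · obtain ⟨-, ha⟩ := key τ τ' heq i hi
      exact hA.1.injective ha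
    · have hi' : i ∉ FS A τ' := by
        intro hcon
        exact hi (key τ' τ heq.symm i hcon).1
      rw [mem_FS] at hi hi'
      have h1 := hv i
      have h2 := hv' i
      have h3 : A.a (τ.symm i) = A.b i + 1 := by omega
      have h4 : A.a (τ'.symm i) = A.b i + 1 := by omega
      exact hA.1.injective (h3.trans h4.symm)
  have : τ.symm = τ'.symm := Equiv.ext hsymm
  have h5 := congrArg Equiv.symm this
  simpa using h5

lemma obt_forward (hA : RegularBS A) {σ : Equiv.Perm (Fin k)} (hvσ : Valid A σ)
    {n : Multisegment} (hobt : Obt n (mOf A σ)) :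
    ∃ τ, Valid A τ ∧ BruhatLE τ σ ∧ n = mOf A τ := by
  unfold Obt at hobt
  induction hobt using Relation.ReflTransGen.head_induction_on with
  | refl => exact ⟨σ, hvσ, bruhatLE_refl σ, rfl⟩
  | head hstep hrest ih =>
    obtain ⟨τ, hvτ, hle, rfl⟩ := ih
    obtain ⟨u, v, hsc, rfl⟩ := step_to_sc hA hstep
    exact ⟨_, valid_swap hvτ hsc,
      bruhatLE_trans (swap_le τ hsc.1 hsc.2.1) hle, rfl⟩

lemma obt_backward (hA : RegularBS A) {σ0 : Equiv.Perm (Fin k)} (hσ0 : Sigma0Spec A σ0) :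
    ∀ (N : ℕ) (σ τ : Equiv.Perm (Fin k)), lenPerm σ ≤ N → Valid A σ → Valid A τ →
      BruhatLE τ σ → Obt (mOf A τ) (mOf A σ) := by
  intro N
  induction N with
  | zero =>
    intro σ τ hN hvσ hvτ hle
    by_cases h : τ = σ
    · subst h; exact Relation.ReflTransGen.refl
    · obtain ⟨u, v, huv, hinv, -⟩ := bruhat_lift hle h
      have := len_swap σ huv hinv
      omega
  | succ N ih =>
    intro σ τ hN hvσ hvτ hle
    by_cases h : τ = σ
    · subst h; exact Relation.ReflTransGen.refl
    · obtain ⟨u, v, huv, hinv, hle2⟩ := bruhat_lift hle h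
      have hvσ2 : Valid A (σ * Equiv.swap u v) :=
        valid_of_le hσ0 (bruhatLE_trans (sigma0_min hσ0 hvτ) hle2)
      have hsymm : (σ * Equiv.swap u v).symm (σ u) = v := by
        rw [symm_mul_swap, Equiv.symm_apply_apply, Equiv.swap_apply_left]
      have hsc : StepCond A σ u v := by
        refine ⟨huv, hinv, ?_⟩
        have := hvσ2 (σ u)
        rwa [hsymm] at this
      have hstep := sc_step hA hsc
      have hlen := len_lt_of_stepCond hsc
      exact Relation.ReflTransGen.tail
        (ih (σ * Equiv.swap u v) τ (by omega) hvσ2 hvτ hle2) hstep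

lemma stepN_tail : ∀ (l : ℕ) (m p n' : Multisegment),
    StepN l m p → Step p n' → StepN (l + 1) m n' := by
  intro l
  induction l with
  | zero =>
    intro m p n' h hstep
    rw [show m = p from h]
    exact ⟨n', hstep, rfl⟩
  | succ l ih =>
    intro m p n' h hstep
    obtain ⟨q, h1, h2⟩ := h
    exact ⟨q, h1, ih q p n' h2 hstep⟩

lemma stepN_bound (hA : RegularBS A) {σ : Equiv.Perm (Fin k)} (hvσ : Valid A σ) :
    ∀ (l : ℕ) (m' : Multisegment), StepN l m' (mOf A σ) →
      ∃ τ, Valid A τ ∧ m' = mOf A τ ∧ l + lenPerm τ ≤ lenPerm σ := by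
  intro l
  induction l with
  | zero =>
    intro m' h
    exact ⟨σ, hvσ, h, by omega⟩
  | succ l ih =>
    intro m' h
    obtain ⟨p, hstep, hsn⟩ := h
    obtain ⟨τ, hvτ, rfl, hlen⟩ := ih p hsn
    obtain ⟨u, v, hsc, rfl⟩ := step_to_sc hA hstep
    have h2 := len_lt_of_stepCond hsc
    exact ⟨_, valid_swap hvτ hsc, rfl, by omega⟩

lemma stepN_chain (hA : RegularBS A) {σ0 : Equiv.Perm (Fin k)} (hσ0 : Sigma0Spec A σ0) :
    ∀ (N : ℕ) (τ : Equiv.Perm (Fin k)), lenPerm τ ≤ N → Valid A τ →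
      StepN (lenPerm τ - lenPerm σ0) (mOf A σ0) (mOf A τ) := by
  intro N
  induction N with
  | zero =>
    intro τ hN hvτ
    by_cases h : τ = σ0
    · subst h
      simp only [Nat.sub_self]
      rfl
    · obtain ⟨u, v, hsc⟩ := descent_exists hσ0 hvτ h
      have := len_lt_of_stepCond hsc
      omega
  | succ N ih =>
    intro τ hN hvτ
    by_cases h : τ = σ0
    · subst h
      simp only [Nat.sub_self]
      rfl
    · obtain ⟨u, v, hsc0⟩ := descent_exists hσ0 hvτ h
      obtain ⟨u', v', hsc, hlen⟩ := descent_unit (v.val - u.val) u v le_rfl hsc0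
      have hvτ' := valid_swap hvτ hsc
      have hlow := sigma0_len_le hσ0 hvτ'
      have hchain := ih (τ * Equiv.swap u' v') (by omega) hvτ'
      have hstep := sc_step hA hsc
      have := stepN_tail _ _ _ _ hchain hstep
      have heq : lenPerm (τ * Equiv.swap u' v') - lenPerm σ0 + 1
          = lenPerm τ - lenPerm σ0 := by omega
      rwa [heq] at this

lemma complexity_mOf (hA : RegularBS A) {σ0 σ : Equiv.Perm (Fin k)}
    (hσ0 : Sigma0Spec A σ0) (hvσ : Valid A σ) :
    complexity (mOf A σ) = lenPerm σ - lenPerm σ0 := by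
  unfold complexity
  have hub : ∀ l ∈ {l : ℕ | ∃ m', StepN l m' (mOf A σ)}, l ≤ lenPerm σ - lenPerm σ0 := by
    rintro l ⟨m', hm⟩
    obtain ⟨τ, hvτ, -, hlen⟩ := stepN_bound hA hvσ l m' hm
    have := sigma0_len_le hσ0 hvτ
    omega
  have hmem : (lenPerm σ - lenPerm σ0) ∈ {l : ℕ | ∃ m', StepN l m' (mOf A σ)} :=
    ⟨mOf A σ0, stepN_chain hA hσ0 (lenPerm σ) σ le_rfl hvσ⟩
  apply le_antisymm
  · exact csSup_le ⟨_, hmem⟩ hub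
  · exact le_csSup ⟨lenPerm σ - lenPerm σ0, fun x hx => hub x hx⟩ hmem

lemma sigma0_mul_swap_ne {σ0 : Equiv.Perm (Fin k)} {u v : Fin k} (hne : u ≠ v) :
    σ0 * Equiv.swap u v ≠ σ0 := by
  intro h
  have h2 := congrArg (fun π : Equiv.Perm (Fin k) => π u) h
  simp only [Equiv.Perm.mul_apply, Equiv.swap_apply_left] at h2
  exact hne (σ0.injective h2).symm

lemma depth_set_eq (hA : RegularBS A) {σ0 σ : Equiv.Perm (Fin k)}
    (hσ0 : Sigma0Spec A σ0) (hle : BruhatLE σ0 σ) :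
    {n : Multisegment | APU n ∧ Obt n (mOf A σ)} =
    (fun t => mOf A (σ0 * t)) ''
      {t : Equiv.Perm (Fin k) | IsTransposition t ∧ BruhatLE σ0 (σ0 * t) ∧
        BruhatLE (σ0 * t) σ} := by
  have hvσ : Valid A σ := valid_of_le hσ0 hle
  apply Set.ext
  intro n
  constructor
  · rintro ⟨⟨m', hpu, hstep⟩, hobt⟩
    obtain ⟨τ, hvτ, hleτ, rfl⟩ := obt_forward hA hvσ hobt
    obtain ⟨u, v, hsc, rfl⟩ := step_to_sc hA hstep
    have hvτ' := valid_swap hvτ hsc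
    have heq0 : τ * Equiv.swap u v = σ0 := by
      by_contra hcon
      exact not_pu hA hσ0 hvτ' hcon hpu
    have hτ : τ = σ0 * Equiv.swap u v := by
      rw [← heq0, mul_swap_swap]
    refine ⟨Equiv.swap u v, ⟨⟨u, v, ne_of_lt hsc.1, rfl⟩, ?_, ?_⟩, ?_⟩
    · rw [← hτ]
      exact sigma0_min hσ0 hvτ
    · rw [← hτ]
      exact hleτ
    · show mOf A (σ0 * Equiv.swap u v) = mOf A τ
      rw [← hτ]
  · rintro ⟨t, ⟨⟨u, v, hne, rfl⟩, h1, h2⟩, rfl⟩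
    have hvτ : Valid A (σ0 * Equiv.swap u v) := valid_of_le hσ0 h1
    -- order u and v
    have main : ∀ u' v' : Fin k, u' < v' → Equiv.swap u v = Equiv.swap u' v' →
        APU (mOf A (σ0 * Equiv.swap u v)) ∧
          Obt (mOf A (σ0 * Equiv.swap u v)) (mOf A σ) := by
      intro u' v' huv' hswe
      set τ : Equiv.Perm (Fin k) := σ0 * Equiv.swap u v with hτdef
      have hτs : τ * Equiv.swap u' v' = σ0 := by
        rw [hτdef, hswe, mul_swap_swap]
      have hτu : τ u' = σ0 v' := by
        rw [hτdef, hswe, Equiv.Perm.mul_apply, Equiv.swap_apply_left]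
      have hτv : τ v' = σ0 u' := by
        rw [hτdef, hswe, Equiv.Perm.mul_apply, Equiv.swap_apply_right]
      have hσ0uv : σ0 u' < σ0 v' := by
        rcases lt_trichotomy (σ0 u') (σ0 v') with hh | hh | hh
        · exact hh
        · exact absurd (σ0.injective hh) (ne_of_lt huv')
        · exfalso
          have hle3 : BruhatLE (σ0 * Equiv.swap u' v') σ0 := swap_le σ0 huv' hh
          rw [← hswe] at hle3
          have := bruhatLE_antisymm h1 hle3
          exact sigma0_mul_swap_ne hne this.symm
      have hsc : StepCond A τ u' v' := by
        refine ⟨huv', ?_, ?_⟩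
        · rw [hτu, hτv]
          exact hσ0uv
        · rw [hτu]
          have := valid_sigma0 hσ0 (σ0 v')
          rwa [Equiv.symm_apply_apply] at this
      constructor
      · refine ⟨mOf A σ0, pu_sigma0 hA hσ0, ?_⟩
        have := sc_step hA hsc
        rwa [hτs] at this
      · exact obt_backward hA hσ0 (lenPerm σ) σ τ le_rfl hvσ hvτ h2
    rcases lt_or_gt_of_ne hne with hlt | hgt
    · have h := main u v hlt rfl
      exact ⟨h.1, h.2⟩
    · have h := main v u hgt (Equiv.swap_comm u v)
      exact ⟨h.1, h.2⟩

lemma depth_mOf (hA : RegularBS A) {σ0 σ : Equiv.Perm (Fin k)}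
    (hσ0 : Sigma0Spec A σ0) (hle : BruhatLE σ0 σ) :
    depth (mOf A σ) =
      {t : Equiv.Perm (Fin k) | IsTransposition t ∧ BruhatLE σ0 (σ0 * t) ∧
        BruhatLE (σ0 * t) σ}.ncard := by
  unfold depth
  rw [depth_set_eq hA hσ0 hle]
  apply Set.ncard_image_of_injOn
  intro t1 h1 t2 h2 he
  have hv1 : Valid A (σ0 * t1) := valid_of_le hσ0 h1.2.1
  have hv2 : Valid A (σ0 * t2) := valid_of_le hσ0 h2.2.1
  have := mOf_inj hA hv1 hv2 he
  exact mul_left_cancel this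

lemma swap_inj_ordered {u v u' v' : Fin k} (h1 : u < v) (h2 : u' < v')
    (he : Equiv.swap u v = Equiv.swap u' v') : u = u' ∧ v = v' := by
  have hne : u ≠ v := ne_of_lt h1
  have hne' : u' ≠ v' := ne_of_lt h2
  have happ : Equiv.swap u v u' = v' := by rw [he, Equiv.swap_apply_left]
  by_cases hc1 : u' = u
  · subst hc1
    rw [Equiv.swap_apply_left] at happ
    exact ⟨rfl, happ⟩
  · by_cases hc2 : u' = v
    · subst hc2
      rw [Equiv.swap_apply_right] at happ
      exfalso
      rw [← happ] at h2
      exact absurd (lt_trans h1 h2) (lt_irrefl _)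
    · rw [Equiv.swap_apply_of_ne_of_ne hc1 hc2] at happ
      exact absurd happ hne'

lemma card_lower {σ0 : Equiv.Perm (Fin k)} :
    {t : Equiv.Perm (Fin k) | IsTransposition t ∧ BruhatLE (σ0 * t) σ0}.ncard
      = lenPerm σ0 := by
  have hset : {t : Equiv.Perm (Fin k) | IsTransposition t ∧ BruhatLE (σ0 * t) σ0}
      = (fun p : Fin k × Fin k => Equiv.swap p.1 p.2) ''
        ↑(Finset.univ.filter fun p : Fin k × Fin k => p.1 < p.2 ∧ σ0 p.2 < σ0 p.1) := by
    apply Set.ext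
    rintro t
    constructor
    · rintro ⟨⟨u, v, hne, rfl⟩, hle⟩
      have main : ∀ u' v' : Fin k, u' < v' → Equiv.swap u v = Equiv.swap u' v' →
          σ0 v' < σ0 u' := by
        intro u' v' huv' hswe
        rcases lt_trichotomy (σ0 v') (σ0 u') with hh | hh | hh
        · exact hh
        · exact absurd (σ0.injective hh) (ne_of_gt huv')
        · exfalso
          have hle2 : BruhatLE σ0 (σ0 * Equiv.swap u' v') := le_swap σ0 huv' hh
          rw [← hswe] at hle2
          have := bruhatLE_antisymm hle2 hle
          exact sigma0_mul_swap_ne hne this.symm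
      rcases lt_or_gt_of_ne hne with hlt | hgt
      · exact ⟨(u, v), by
          simp only [Finset.coe_filter, Set.mem_setOf_eq, Finset.mem_univ, true_and]
          exact ⟨hlt, main u v hlt rfl⟩, rfl⟩
      · exact ⟨(v, u), by
          simp only [Finset.coe_filter, Set.mem_setOf_eq, Finset.mem_univ, true_and]
          exact ⟨hgt, main v u hgt (Equiv.swap_comm u v)⟩, Equiv.swap_comm v u⟩
    · rintro ⟨⟨u, v⟩, hp, rfl⟩
      simp only [Finset.coe_filter, Set.mem_setOf_eq, Finset.mem_univ, true_and] at hp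
      exact ⟨⟨u, v, ne_of_lt hp.1, rfl⟩, swap_le σ0 hp.1 hp.2⟩
  rw [hset, Set.ncard_image_of_injOn, Set.ncard_coe_finset]
  · rfl
  · rintro ⟨u, v⟩ hp ⟨u', v'⟩ hp' he
    simp only [Finset.coe_filter, Set.mem_setOf_eq, Finset.mem_univ, true_and] at hp hp'
    obtain ⟨e1, e2⟩ := swap_inj_ordered hp.1 hp'.1 he
    rw [e1, e2]

lemma card_union_split {σ0 σ : Equiv.Perm (Fin k)} (hle : BruhatLE σ0 σ) :
    {t : Equiv.Perm (Fin k) | IsTransposition t ∧ BruhatLE (σ0 * t) σ}.ncard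
      = {t : Equiv.Perm (Fin k) | IsTransposition t ∧ BruhatLE σ0 (σ0 * t) ∧
          BruhatLE (σ0 * t) σ}.ncard + lenPerm σ0 := by
  have hdich : ∀ t : Equiv.Perm (Fin k), IsTransposition t →
      BruhatLE σ0 (σ0 * t) ∨ BruhatLE (σ0 * t) σ0 := by
    rintro t ⟨u, v, hne, rfl⟩
    have main : ∀ u' v' : Fin k, u' < v' → Equiv.swap u v = Equiv.swap u' v' →
        BruhatLE σ0 (σ0 * Equiv.swap u v) ∨ BruhatLE (σ0 * Equiv.swap u v) σ0 := by
      intro u' v' huv' hswe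
      rcases lt_trichotomy (σ0 u') (σ0 v') with hh | hh | hh
      · left; rw [hswe]; exact le_swap σ0 huv' hh
      · exact absurd (σ0.injective hh) (ne_of_lt huv')
      · right; rw [hswe]; exact swap_le σ0 huv' hh
    rcases lt_or_gt_of_ne hne with hlt | hgt
    · exact main u v hlt rfl
    · exact main v u hgt (Equiv.swap_comm u v)
  have hunion : {t : Equiv.Perm (Fin k) | IsTransposition t ∧ BruhatLE (σ0 * t) σ}
      = {t : Equiv.Perm (Fin k) | IsTransposition t ∧ BruhatLE σ0 (σ0 * t) ∧
          BruhatLE (σ0 * t) σ}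
        ∪ {t : Equiv.Perm (Fin k) | IsTransposition t ∧ BruhatLE (σ0 * t) σ0} := by
    apply Set.ext
    intro t
    constructor
    · rintro ⟨ht, hles⟩
      rcases hdich t ht with h | h
      · exact Or.inl ⟨ht, h, hles⟩
      · exact Or.inr ⟨ht, h⟩
    · rintro (⟨ht, -, hles⟩ | ⟨ht, hle0⟩)
      · exact ⟨ht, hles⟩
      · exact ⟨ht, bruhatLE_trans hle0 hle⟩
  have hdisj : Disjoint
      {t : Equiv.Perm (Fin k) | IsTransposition t ∧ BruhatLE σ0 (σ0 * t) ∧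
        BruhatLE (σ0 * t) σ}
      {t : Equiv.Perm (Fin k) | IsTransposition t ∧ BruhatLE (σ0 * t) σ0} := by
    rw [Set.disjoint_left]
    rintro t ⟨⟨u, v, hne, rfl⟩, h1, -⟩ ⟨-, h2⟩
    exact sigma0_mul_swap_ne hne (bruhatLE_antisymm h1 h2).symm
  rw [hunion, Set.ncard_union_eq hdisj (Set.toFinite _) (Set.toFinite _), card_lower]

end Assemble

end BMS

theorem statement4 {k : ℕ} (A : BiSeq k) (hA : RegularBS A)
    (σ0 σ : Equiv.Perm (Fin k)) (hσ0 : Sigma0Spec A σ0) (hle : BruhatLE σ0 σ) :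
    depth (mOf A σ) =
      {t : Equiv.Perm (Fin k) | IsTransposition t ∧ BruhatLE σ0 (σ0 * t) ∧
        BruhatLE (σ0 * t) σ}.ncard ∧
    complexity (mOf A σ) = lenPerm σ - lenPerm σ0 ∧
    (IsBalanced (mOf A σ) ↔ SmoothPair σ0 σ) := by
  have hvσ : BMS.Valid A σ := BMS.valid_of_le hσ0 hle
  have h1 := BMS.depth_mOf hA hσ0 hle
  have h2 := BMS.complexity_mOf hA hσ0 hvσ
  refine ⟨h1, h2, ?_⟩
  have hreg := BMS.mOf_regular hA σ
  have hlen0 : lenPerm σ0 ≤ lenPerm σ := BMS.sigma0_len_le hσ0 hvσ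
  have hsplit := BMS.card_union_split (σ0 := σ0) (σ := σ) hle
  unfold IsBalanced SmoothPair
  constructor
  · rintro ⟨-, hd⟩
    refine ⟨hle, ?_⟩
    rw [h1, h2] at hd
    omega
  · rintro ⟨-, hs⟩
    refine ⟨hreg, ?_⟩
    rw [h1, h2]
    omega
end

section
/- Let σ0 ≤ σ in S_k (Bruhat order) and let i be an index with σ(i) = σ0(i). Let T_i = {t ∈ T : t(i) ≠ i} and ℓ_i(σ) = #{r < i : σ(r) > σ(i)} + #{r > i : σ(r) < σ(i)}. Then #{t ∈ T_i : σ0·t ≤ σ} ≥ ℓ_i(σ). -/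
namespace St8

open Finset

variable {k : ℕ}

lemma fcongr {a b : Fin k → Prop} [DecidablePred a] [DecidablePred b]
    (h : ∀ u, a u ↔ b u) : univ.filter a = univ.filter b :=
  filter_congr fun u _ => h u

lemma fsplit (a b : Fin k → Prop) [DecidablePred a] [DecidablePred b] :
    (univ.filter fun u => a u ∧ b u).card + (univ.filter fun u => a u ∧ ¬ b u).card
      = (univ.filter a).card := by
  rw [← Finset.filter_filter, ← Finset.filter_filter]
  exact Finset.card_filter_add_card_filter_not _

def cnt (π : Equiv.Perm (Fin k)) (P Q : ℕ) : ℕ :=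
  (univ.filter fun u : Fin k => u.val < P ∧ (π u).val < Q).card

def cocnt (π : Equiv.Perm (Fin k)) (P Q : ℕ) : ℕ :=
  (univ.filter fun u : Fin k => P ≤ u.val ∧ Q ≤ (π u).val).card

lemma card_val_lt (P : ℕ) :
    (univ.filter fun u : Fin k => u.val < P).card = min P k := by
  apply Finset.card_eq_of_bijective (fun m hm => ⟨m, by omega⟩)
  · intro a ha
    simp only [mem_filter, mem_univ, true_and] at ha
    exact ⟨a.val, by omega, rfl⟩
  · intro m hm
    simp only [mem_filter, mem_univ, true_and]
    omega
  · intro m n hm hn hmn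
    simpa [Fin.ext_iff] using hmn

lemma card_pi_val_lt (π : Equiv.Perm (Fin k)) (Q : ℕ) :
    (univ.filter fun u : Fin k => (π u).val < Q).card = min Q k := by
  rw [← card_val_lt (k := k) Q]
  apply Finset.card_bij (fun u _ => π u)
  · intro a ha; simp only [mem_filter, mem_univ, true_and] at ha ⊢; exact ha
  · intro a _ b _ hab; exact π.injective hab
  · intro b hb
    simp only [mem_filter, mem_univ, true_and] at hb ⊢
    exact ⟨π.symm b, by simpa using hb, by simp⟩

lemma rankFn_eq_cnt (π : Equiv.Perm (Fin k)) (p q : Fin k) :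
    rankFn π p q = cnt π (p.val + 1) (q.val + 1) := by
  unfold rankFn cnt
  congr 1
  exact fcongr fun u => by
    simp only [Fin.le_def, Nat.lt_succ_iff]

lemma cnt_le_of_bruhat {σ0 σ : Equiv.Perm (Fin k)} (h : BruhatLE σ0 σ) (P Q : ℕ) :
    cnt σ P Q ≤ cnt σ0 P Q := by
  rcases Nat.eq_zero_or_pos P with hP | hP
  · subst hP; simp [cnt]
  rcases Nat.eq_zero_or_pos Q with hQ | hQ
  · subst hQ; simp [cnt]
  rcases Nat.eq_zero_or_pos k with hk | hk
  · subst hk; simp [cnt]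
  have key : ∀ π : Equiv.Perm (Fin k),
      cnt π P Q = rankFn π ⟨min (P-1) (k-1), by omega⟩ ⟨min (Q-1) (k-1), by omega⟩ := by
    intro π
    rw [rankFn_eq_cnt]
    show cnt π P Q = cnt π (min (P-1) (k-1) + 1) (min (Q-1) (k-1) + 1)
    unfold cnt
    congr 1
    exact fcongr fun u => by
      have := u.isLt
      have := (π u).isLt
      omega
  rw [key, key]
  exact h _ _

lemma cnt_cocnt (π : Equiv.Perm (Fin k)) (P Q : ℕ) :
    cnt π P Q + k = cocnt π P Q + min P k + min Q k := by
  classical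
  have h1 : cnt π P Q +
      (univ.filter fun u : Fin k => u.val < P ∧ ¬ (π u).val < Q).card = min P k := by
    rw [← card_val_lt (k := k) P]
    exact fsplit _ _
  have h2 : (univ.filter fun u : Fin k => ¬ (π u).val < Q ∧ u.val < P).card +
      (univ.filter fun u : Fin k => ¬ (π u).val < Q ∧ ¬ u.val < P).card
      = (univ.filter fun u : Fin k => ¬ (π u).val < Q).card := fsplit _ _
  have h3 : (univ.filter fun u : Fin k => (π u).val < Q).card +
      (univ.filter fun u : Fin k => ¬ (π u).val < Q).card = k := by
    rw [Finset.card_filter_add_card_filter_not]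
    simp
  have e1 : (univ.filter fun u : Fin k => u.val < P ∧ ¬ (π u).val < Q)
      = (univ.filter fun u : Fin k => ¬ (π u).val < Q ∧ u.val < P) :=
    fcongr fun u => by tauto
  have e2 : cocnt π P Q
      = (univ.filter fun u : Fin k => ¬ (π u).val < Q ∧ ¬ u.val < P).card := by
    unfold cocnt; congr 1; exact fcongr fun u => by omega
  have h5 := card_pi_val_lt π Q
  rw [e1] at h1
  omega

def rot (π : Equiv.Perm (Fin k)) : Equiv.Perm (Fin k) :=
  Fin.revPerm * π * Fin.revPerm

lemma rot_apply (π : Equiv.Perm (Fin k)) (u : Fin k) : rot π u = (π u.rev).rev := rfl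

lemma rot_mul_swap (π : Equiv.Perm (Fin k)) (i j : Fin k) :
    rot (π * Equiv.swap i j) = rot π * Equiv.swap i.rev j.rev := by
  have : Equiv.swap i.rev j.rev = Fin.revPerm * Equiv.swap i j * Fin.revPerm := by
    have h := Equiv.swap_apply_apply (Fin.revPerm (n := k)) i j
    simpa [Equiv.Perm.inv_def, Fin.revPerm_symm] using h
  rw [this]
  unfold rot
  have hRR : (Fin.revPerm : Equiv.Perm (Fin k)) * Fin.revPerm = 1 := by
    ext u; simp [Equiv.Perm.mul_apply]
  calc Fin.revPerm * (π * Equiv.swap i j) * Fin.revPerm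
      = Fin.revPerm * π * (Fin.revPerm * Fin.revPerm) * Equiv.swap i j * Fin.revPerm := by
        rw [hRR]; group
    _ = Fin.revPerm * π * Fin.revPerm * (Fin.revPerm * Equiv.swap i j * Fin.revPerm) := by
        group

lemma cocnt_eq_zero (π : Equiv.Perm (Fin k)) {P Q : ℕ} (h : k ≤ P ∨ k ≤ Q) :
    cocnt π P Q = 0 := by
  unfold cocnt
  rw [Finset.card_eq_zero, Finset.filter_eq_empty_iff]
  intro u _
  have := u.isLt
  have := (π u).isLt
  omega

lemma cocnt_rot (π : Equiv.Perm (Fin k)) {P Q : ℕ} (hP : P ≤ k) (hQ : Q ≤ k) :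
    cocnt (rot π) P Q = cnt π (k - P) (k - Q) := by
  unfold cocnt cnt
  apply Finset.card_bij (fun u _ => u.rev)
  · intro a ha
    simp only [mem_filter, mem_univ, true_and] at ha ⊢
    simp only [rot_apply] at ha ⊢
    have h1 := Fin.val_rev a
    have h2 := Fin.val_rev (π a.rev)
    have := a.isLt
    have := (π a.rev).isLt
    omega
  · intro a _ b _ hab; exact Fin.rev_injective hab
  · intro b hb
    simp only [mem_filter, mem_univ, true_and] at hb ⊢
    simp only [rot_apply] at hb ⊢
    refine ⟨b.rev, ?_, by simp⟩
    rw [Fin.rev_rev]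
    have h1 := Fin.val_rev b
    have h2 := Fin.val_rev (π b)
    have := b.isLt
    have := (π b).isLt
    omega


lemma cocnt_le_of_bruhat {σ0 σ : Equiv.Perm (Fin k)} (h : BruhatLE σ0 σ) (P Q : ℕ) :
    cocnt σ P Q ≤ cocnt σ0 P Q := by
  have i1 := cnt_cocnt σ P Q
  have i2 := cnt_cocnt σ0 P Q
  have := cnt_le_of_bruhat h P Q
  omega

lemma bruhat_of_cocnt {τ σ : Equiv.Perm (Fin k)} (hc : ∀ P Q, cocnt σ P Q ≤ cocnt τ P Q) :
    BruhatLE τ σ := by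
  intro p q
  rw [rankFn_eq_cnt, rankFn_eq_cnt]
  have i1 := cnt_cocnt σ (p.val+1) (q.val+1)
  have i2 := cnt_cocnt τ (p.val+1) (q.val+1)
  have := hc (p.val+1) (q.val+1)
  omega

lemma bruhat_rot {σ0 σ : Equiv.Perm (Fin k)} (h : BruhatLE σ0 σ) :
    BruhatLE (rot σ0) (rot σ) := by
  apply bruhat_of_cocnt
  intro P Q
  by_cases hPQ : P ≤ k ∧ Q ≤ k
  · rw [cocnt_rot _ hPQ.1 hPQ.2, cocnt_rot _ hPQ.1 hPQ.2]
    exact cnt_le_of_bruhat h _ _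
  · rw [cocnt_eq_zero _ (by omega), cocnt_eq_zero _ (by omega)]

lemma rot_rot (π : Equiv.Perm (Fin k)) : rot (rot π) = π := by
  ext u
  simp [rot_apply, Fin.rev_rev]

lemma bruhat_rot_iff {τ σ : Equiv.Perm (Fin k)} :
    BruhatLE (rot τ) (rot σ) ↔ BruhatLE τ σ :=
  ⟨fun h => by have := bruhat_rot h; rwa [rot_rot, rot_rot] at this, bruhat_rot⟩

lemma rank_mul_swap (π : Equiv.Perm (Fin k)) {p1 p2 : Fin k} (h12 : p1 < p2)
    (hv : π p1 < π p2) (p q : Fin k) :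
    rankFn π p q = rankFn (π * Equiv.swap p1 p2) p q
      + (if p1 ≤ p ∧ ¬ p2 ≤ p ∧ π p1 ≤ q ∧ ¬ π p2 ≤ q then 1 else 0) := by
  classical
  unfold rankFn
  rw [Finset.card_filter, Finset.card_filter]
  have hsub : ({p1, p2} : Finset (Fin k)) ⊆ univ := subset_univ _
  rw [← Finset.sum_sdiff hsub, ← Finset.sum_sdiff hsub]
  have hne : p1 ≠ p2 := ne_of_lt h12
  have heq : ∀ u ∈ univ \ {p1, p2},
      (if u ≤ p ∧ (π * Equiv.swap p1 p2) u ≤ q then (1:ℕ) else 0)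
      = if u ≤ p ∧ π u ≤ q then 1 else 0 := by
    intro u hu
    simp only [mem_sdiff, mem_insert, mem_singleton] at hu
    push_neg at hu
    rw [Equiv.Perm.mul_apply, Equiv.swap_apply_of_ne_of_ne hu.2.1 hu.2.2]
  rw [Finset.sum_congr rfl heq]
  rw [Finset.sum_pair hne, Finset.sum_pair hne]
  simp only [Equiv.Perm.mul_apply, Equiv.swap_apply_left, Equiv.swap_apply_right]
  have h1 : p2 ≤ p → p1 ≤ p := fun h => le_trans (le_of_lt h12) h
  have h2 : π p2 ≤ q → π p1 ≤ q := fun h => le_trans (le_of_lt hv) h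
  split_ifs <;> first | omega | tauto

lemma rank_le_mul_swap (π : Equiv.Perm (Fin k)) {p1 p2 : Fin k} (h12 : p1 < p2)
    (hv : π p2 < π p1) (p q : Fin k) :
    rankFn π p q ≤ rankFn (π * Equiv.swap p1 p2) p q := by
  have hτ : (π * Equiv.swap p1 p2) * Equiv.swap p1 p2 = π := by
    rw [mul_assoc, Equiv.swap_mul_self, mul_one]
  have hv' : (π * Equiv.swap p1 p2) p1 < (π * Equiv.swap p1 p2) p2 := by
    simp only [Equiv.Perm.mul_apply, Equiv.swap_apply_left, Equiv.swap_apply_right]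
    exact hv
  have := rank_mul_swap (π * Equiv.swap p1 p2) h12 hv' p q
  rw [hτ] at this
  omega

lemma split_left (π : Equiv.Perm (Fin k)) (i : Fin k) :
    (univ.filter fun r : Fin k => r < i ∧ π i < π r).card
      + (univ.filter fun r : Fin k => r < i ∧ π r < π i).card = i.val := by
  classical
  have key : (univ.filter fun r : Fin k => r < i).card = i.val := by
    rw [fcongr (b := fun r : Fin k => r.val < i.val) (fun u => Fin.lt_def)]
    rw [card_val_lt]
    have := i.isLt
    omega
  have hs := fsplit (fun r : Fin k => r < i) (fun r : Fin k => π i < π r)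
  have he : (univ.filter fun r : Fin k => r < i ∧ ¬ π i < π r)
      = (univ.filter fun r : Fin k => r < i ∧ π r < π i) := by
    apply fcongr
    intro r
    constructor
    · rintro ⟨h1, h2⟩
      refine ⟨h1, lt_of_le_of_ne (not_lt.mp h2) fun he => ?_⟩
      exact absurd (π.injective he) (ne_of_lt h1)
    · rintro ⟨h1, h2⟩
      exact ⟨h1, not_lt.mpr (le_of_lt h2)⟩
  rw [he] at hs
  omega

def BadSet (σ0 σ : Equiv.Perm (Fin k)) (c Q0 P : ℕ) : Finset (Fin k) :=
  univ.filter fun j =>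
    j.val < P ∧ Q0 ≤ (σ0 j).val ∧ (σ0 j).val < c ∧
    ∃ p, p < P ∧ j.val ≤ p ∧ ∃ q, q < c ∧ Q0 ≤ q ∧ (σ0 j).val ≤ q ∧
      cnt σ0 (p+1) (q+1) = cnt σ (p+1) (q+1)

lemma badF (σ0 σ : Equiv.Perm (Fin k)) (hb : ∀ P Q, cnt σ P Q ≤ cnt σ0 P Q) (c : ℕ) :
    ∀ P Q0, (BadSet σ0 σ c Q0 P).card ≤
      (univ.filter fun j : Fin k => j.val < P ∧ Q0 ≤ (σ j).val ∧ (σ j).val < c).card := by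
  intro P
  induction P using Nat.strong_induction_on with
  | _ P IH =>
  intro Q0
  classical
  set ZB := (Finset.range P ×ˢ Finset.range c).filter
      (fun pq => Q0 ≤ pq.2 ∧ cnt σ0 (pq.1+1) (pq.2+1) = cnt σ (pq.1+1) (pq.2+1)) with hZB
  have memZB : ∀ pq : ℕ × ℕ, pq ∈ ZB ↔
      pq.1 < P ∧ pq.2 < c ∧ Q0 ≤ pq.2 ∧ cnt σ0 (pq.1+1) (pq.2+1) = cnt σ (pq.1+1) (pq.2+1) := by
    intro pq
    rw [hZB, mem_filter, Finset.mem_product, Finset.mem_range, Finset.mem_range]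
    tauto
  by_cases hZ : ZB = ∅
  · have hempty : BadSet σ0 σ c Q0 P = ∅ := by
      rw [Finset.eq_empty_iff_forall_notMem]
      intro j hj
      rw [BadSet, mem_filter] at hj
      obtain ⟨-, h1, h2, h3, p, hp, hjp, q, hq, hQ0q, hjq, hzero⟩ := hj
      have : (p, q) ∈ ZB := (memZB (p, q)).mpr ⟨hp, hq, hQ0q, hzero⟩
      rw [hZ] at this
      exact absurd this (Finset.notMem_empty _)
    simp [hempty]
  · have hZne : ZB.Nonempty := Finset.nonempty_of_ne_empty hZ
    set ps := (ZB.image Prod.fst).max' (hZne.image _) with hps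
    have hmax1 : ∀ pq ∈ ZB, pq.1 ≤ ps := fun pq hpq =>
      Finset.le_max' _ _ (Finset.mem_image_of_mem _ hpq)
    have hZBs : (ZB.filter (fun pq => pq.1 = ps)).Nonempty := by
      have := Finset.max'_mem (ZB.image Prod.fst) (hZne.image _)
      rw [Finset.mem_image] at this
      obtain ⟨pq, hpq, hfst⟩ := this
      exact ⟨pq, Finset.mem_filter.mpr ⟨hpq, hfst⟩⟩
    set qs := ((ZB.filter (fun pq : ℕ × ℕ => pq.1 = ps)).image Prod.snd).max' (hZBs.image Prod.snd) with hqs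
    have hmax2 : ∀ pq ∈ ZB, pq.1 = ps → pq.2 ≤ qs := fun pq hpq hfst =>
      Finset.le_max' _ _ (Finset.mem_image_of_mem _ (Finset.mem_filter.mpr ⟨hpq, hfst⟩))
    have hzs : (ps, qs) ∈ ZB := by
      have := Finset.max'_mem _ (hZBs.image Prod.snd)
      rw [Finset.mem_image] at this
      obtain ⟨pq, hpq, hsnd⟩ := this
      rw [Finset.mem_filter] at hpq
      have : pq = (ps, qs) := Prod.ext hpq.2 hsnd
      rw [← this]
      exact hpq.1
    rw [memZB] at hzs
    obtain ⟨hps_lt, hqs_lt, hQ0qs, hzero_s⟩ := hzs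
    have hzero_s' : cnt σ0 (ps+1) (qs+1) = cnt σ (ps+1) (qs+1) := hzero_s
    have hps_lt' : ps < P := hps_lt
    have hqs_lt' : qs < c := hqs_lt
    have hQ0qs' : Q0 ≤ qs := hQ0qs
    clear hzero_s hps_lt hqs_lt hQ0qs
    set A := univ.filter fun j : Fin k =>
      j.val ≤ ps ∧ Q0 ≤ (σ0 j).val ∧ (σ0 j).val ≤ qs with hA
    have hsub : BadSet σ0 σ c Q0 P ⊆ A ∪ BadSet σ0 σ c (qs+1) ps := by
      intro j hj
      rw [BadSet, mem_filter] at hj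
      obtain ⟨-, h1, h2, h3, p, hp, hjp, q, hq, hQ0q, hjq, hz0⟩ := hj
      have hmem : (p, q) ∈ ZB := (memZB (p, q)).mpr ⟨hp, hq, hQ0q, hz0⟩
      rw [Finset.mem_union]
      by_cases hcase : (σ0 j).val ≤ qs
      · left
        rw [hA, mem_filter]
        exact ⟨mem_univ _, le_trans hjp (hmax1 _ hmem), h2, hcase⟩
      · right
        push_neg at hcase
        have hqgt : qs < q := lt_of_lt_of_le hcase hjq
        have hplt : p < ps := by
          rcases lt_or_eq_of_le (hmax1 _ hmem) with h' | h'
          · exact h'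
          · exact absurd (hmax2 _ hmem h') (by omega)
        rw [BadSet, mem_filter]
        exact ⟨mem_univ _, by omega, by omega, h3, p, hplt, hjp, q, hq, by omega, hjq, hz0⟩
    have hBadcard : (BadSet σ0 σ c Q0 P).card ≤ A.card + (BadSet σ0 σ c (qs+1) ps).card :=
      le_trans (Finset.card_le_card hsub) (Finset.card_union_le _ _)
    have hIH := IH ps hps_lt' (qs + 1)
    set A' := univ.filter fun j : Fin k =>
      j.val ≤ ps ∧ Q0 ≤ (σ j).val ∧ (σ j).val ≤ qs with hA'
    have hAcard : A.card ≤ A'.card := by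
      have s1 : A.card + cnt σ0 (ps+1) Q0 = cnt σ0 (ps+1) (qs+1) := by
        have := fsplit (fun j : Fin k => j.val < ps+1 ∧ (σ0 j).val < qs+1)
          (fun j : Fin k => Q0 ≤ (σ0 j).val)
        rw [fcongr (b := fun j : Fin k => j.val ≤ ps ∧ Q0 ≤ (σ0 j).val ∧ (σ0 j).val ≤ qs)
          (fun u => by omega)] at this
        rw [fcongr (a := fun j : Fin k => (j.val < ps+1 ∧ (σ0 j).val < qs+1) ∧ ¬ Q0 ≤ (σ0 j).val)
          (b := fun j : Fin k => j.val < ps+1 ∧ (σ0 j).val < Q0)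
          (fun u => by omega)] at this
        exact this
      have s2 : A'.card + cnt σ (ps+1) Q0 = cnt σ (ps+1) (qs+1) := by
        have := fsplit (fun j : Fin k => j.val < ps+1 ∧ (σ j).val < qs+1)
          (fun j : Fin k => Q0 ≤ (σ j).val)
        rw [fcongr (b := fun j : Fin k => j.val ≤ ps ∧ Q0 ≤ (σ j).val ∧ (σ j).val ≤ qs)
          (fun u => by omega)] at this
        rw [fcongr (a := fun j : Fin k => (j.val < ps+1 ∧ (σ j).val < qs+1) ∧ ¬ Q0 ≤ (σ j).val)
          (b := fun j : Fin k => j.val < ps+1 ∧ (σ j).val < Q0)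
          (fun u => by omega)] at this
        exact this
      have s3 := hb (ps+1) Q0
      omega
    have hdisj : Disjoint A'
        (univ.filter fun j : Fin k => j.val < ps ∧ qs+1 ≤ (σ j).val ∧ (σ j).val < c) := by
      rw [Finset.disjoint_left]
      intro j hj1 hj2
      rw [hA', mem_filter] at hj1
      rw [mem_filter] at hj2
      omega
    have hunion : A' ∪ (univ.filter fun j : Fin k =>
          j.val < ps ∧ qs+1 ≤ (σ j).val ∧ (σ j).val < c)
        ⊆ univ.filter fun j : Fin k => j.val < P ∧ Q0 ≤ (σ j).val ∧ (σ j).val < c := by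
      intro j hj
      rw [Finset.mem_union, hA', mem_filter, mem_filter] at hj
      rw [mem_filter]
      rcases hj with hj | hj
      · exact ⟨mem_univ _, by omega, by omega, by omega⟩
      · exact ⟨mem_univ _, by omega, by omega, by omega⟩
    have := Finset.card_union_of_disjoint hdisj
    have := Finset.card_le_card hunion
    omega

instance decBruhat (τ σ : Equiv.Perm (Fin k)) : Decidable (BruhatLE τ σ) :=
  inferInstanceAs (Decidable (∀ i j : Fin k, rankFn σ i j ≤ rankFn τ i j))

lemma LL (σ0 σ : Equiv.Perm (Fin k)) (h : BruhatLE σ0 σ) (i : Fin k) (hi : σ i = σ0 i) :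
    (univ.filter fun r : Fin k => r < i ∧ σ i < σ r).card ≤
    (univ.filter fun j : Fin k => j < i ∧ BruhatLE (σ0 * Equiv.swap i j) σ).card := by
  classical
  set c := (σ i).val with hc
  have hc0 : (σ0 i).val = c := by rw [hc, hi]
  have hb := cnt_le_of_bruhat h
  have hdown : ∀ j : Fin k, j < i → σ0 i < σ0 j → BruhatLE (σ0 * Equiv.swap i j) σ := by
    intro j hji hv p q
    rw [Equiv.swap_comm]
    exact le_trans (h p q) (rank_le_mul_swap σ0 hji hv p q)
  have hup : ∀ j : Fin k, j < i → σ0 j < σ0 i → j ∉ BadSet σ0 σ c 0 i.val →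
      BruhatLE (σ0 * Equiv.swap i j) σ := by
    intro j hji hv hnb p q
    rw [Equiv.swap_comm]
    have hform := rank_mul_swap σ0 hji hv p q
    have hσ := h p q
    by_cases hind : j ≤ p ∧ ¬ i ≤ p ∧ σ0 j ≤ q ∧ ¬ σ0 i ≤ q
    · rw [if_pos hind] at hform
      have hne : rankFn σ p q ≠ rankFn σ0 p q := by
        intro heq
        apply hnb
        rw [BadSet, mem_filter]
        have e1 : j.val < i.val := hji
        have e2 : (σ0 j).val < c := hc0 ▸ (Fin.lt_def.mp hv)
        have e3 : p.val < i.val := Fin.lt_def.mp (not_le.mp hind.2.1)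
        have e4 : j.val ≤ p.val := hind.1
        have e5 : q.val < c := hc0 ▸ (Fin.lt_def.mp (not_le.mp hind.2.2.2))
        have e6 : (σ0 j).val ≤ q.val := hind.2.2.1
        have e7 : cnt σ0 (p.val+1) (q.val+1) = cnt σ (p.val+1) (q.val+1) := by
          rw [← rankFn_eq_cnt, ← rankFn_eq_cnt, heq]
        exact ⟨mem_univ _, e1, Nat.zero_le _, e2,
          p.val, e3, e4, q.val, e5, Nat.zero_le _, e6, e7⟩
      omega
    · rw [if_neg hind] at hform
      omega
  set Bad := BadSet σ0 σ c 0 i.val with hBad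
  set S := univ.filter (fun j : Fin k => j < i ∧ σ0 j < σ0 i) with hS
  set D := univ.filter (fun j : Fin k => j < i ∧ σ0 i < σ0 j) with hD
  set V := univ.filter (fun j : Fin k => j < i ∧ BruhatLE (σ0 * Equiv.swap i j) σ) with hV
  have hBsub : Bad ⊆ S := by
    intro j hj
    rw [hBad, BadSet, mem_filter] at hj
    rw [hS, mem_filter]
    refine ⟨mem_univ _, Fin.lt_def.mpr hj.2.1, Fin.lt_def.mpr ?_⟩
    rw [hc0]
    exact hj.2.2.2.1
  have hsub2 : D ∪ (S \ Bad) ⊆ V := by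
    intro j hj
    rw [Finset.mem_union, Finset.mem_sdiff, hD, hS, mem_filter, mem_filter] at hj
    rw [hV, mem_filter]
    rcases hj with hj | ⟨hj, hnb⟩
    · exact ⟨mem_univ _, hj.2.1, hdown j hj.2.1 hj.2.2⟩
    · exact ⟨mem_univ _, hj.2.1, hup j hj.2.1 hj.2.2 hnb⟩
  have hdisjDS : Disjoint D (S \ Bad) := by
    rw [Finset.disjoint_left]
    intro j hj1 hj2
    rw [hD, mem_filter] at hj1
    rw [Finset.mem_sdiff, hS, mem_filter] at hj2
    exact absurd hj1.2.2 (not_lt.mpr (le_of_lt hj2.1.2.2))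
  have hcard1 : D.card + (S.card - Bad.card) ≤ V.card := by
    have := Finset.card_le_card hsub2
    rw [Finset.card_union_of_disjoint hdisjDS, Finset.card_sdiff_of_subset hBsub] at this
    exact this
  have hx := split_left σ i
  have hx0 := split_left σ0 i
  have hbadF := badF σ0 σ hb c i.val 0
  have hconv : (univ.filter fun j : Fin k =>
      j.val < i.val ∧ 0 ≤ (σ j).val ∧ (σ j).val < c)
      = univ.filter (fun r : Fin k => r < i ∧ σ r < σ i) := by
    apply fcongr
    intro u
    rw [Fin.lt_def, Fin.lt_def, hc]
    omega
  rw [hconv] at hbadF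
  have hSB : Bad.card ≤ S.card := Finset.card_le_card hBsub
  rw [← hS, ← hD] at hx0
  rw [← hBad] at hbadF
  omega

lemma lt_rev_flip {a i : Fin k} (h1 : a < i.rev) : i < a.rev := by
  rw [Fin.lt_def] at h1 ⊢
  have := Fin.val_rev a
  have := Fin.val_rev i
  have := a.isLt
  have := i.isLt
  omega

lemma LR (σ0 σ : Equiv.Perm (Fin k)) (h : BruhatLE σ0 σ) (i : Fin k) (hi : σ i = σ0 i) :
    (univ.filter fun r : Fin k => i < r ∧ σ r < σ i).card ≤
    (univ.filter fun j : Fin k => i < j ∧ BruhatLE (σ0 * Equiv.swap i j) σ).card := by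
  classical
  have h' : BruhatLE (rot σ0) (rot σ) := bruhat_rot h
  have hi' : (rot σ) i.rev = (rot σ0) i.rev := by
    rw [rot_apply, rot_apply, Fin.rev_rev, hi]
  have hmain := LL (rot σ0) (rot σ) h' i.rev hi'
  have e1 : (univ.filter fun r : Fin k => r < i.rev ∧ (rot σ) i.rev < (rot σ) r).card
      = (univ.filter fun r : Fin k => i < r ∧ σ r < σ i).card := by
    apply Finset.card_bij (fun r _ => r.rev)
    · intro a ha
      simp only [mem_filter, mem_univ, true_and, rot_apply, Fin.rev_rev] at ha ⊢
      obtain ⟨h1, h2⟩ := ha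
      constructor
      · exact lt_rev_flip h1
      · exact (Fin.rev_lt_rev).mp h2
    · intro a _ b _ hab; exact Fin.rev_injective hab
    · intro b hb
      simp only [mem_filter, mem_univ, true_and, rot_apply, Fin.rev_rev] at hb ⊢
      refine ⟨b.rev, ⟨?_, ?_⟩, Fin.rev_rev b⟩
      · rw [Fin.rev_lt_rev]; exact hb.1
      · rw [Fin.rev_rev, Fin.rev_lt_rev]; exact hb.2
  have e2 : (univ.filter fun j : Fin k =>
        j < i.rev ∧ BruhatLE (rot σ0 * Equiv.swap i.rev j) (rot σ)).card
      = (univ.filter fun j : Fin k => i < j ∧ BruhatLE (σ0 * Equiv.swap i j) σ).card := by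
    apply Finset.card_bij (fun r _ => r.rev)
    · intro a ha
      simp only [mem_filter, mem_univ, true_and] at ha ⊢
      obtain ⟨h1, h2⟩ := ha
      constructor
      · exact lt_rev_flip h1
      · have hconj : rot (σ0 * Equiv.swap i a.rev) = rot σ0 * Equiv.swap i.rev a := by
          rw [rot_mul_swap, Fin.rev_rev]
        rw [← bruhat_rot_iff, hconj]
        exact h2
    · intro a _ b _ hab; exact Fin.rev_injective hab
    · intro b hb
      simp only [mem_filter, mem_univ, true_and] at hb ⊢
      refine ⟨b.rev, ⟨?_, ?_⟩, Fin.rev_rev b⟩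
      · rw [Fin.rev_lt_rev]; exact hb.1
      · have hconj : rot (σ0 * Equiv.swap i b) = rot σ0 * Equiv.swap i.rev b.rev :=
          rot_mul_swap σ0 i b
        rw [← hconj, bruhat_rot_iff]
        exact hb.2
  rw [e1, e2] at hmain
  exact hmain

end St8

theorem statement8 {k : ℕ} (σ0 σ : Equiv.Perm (Fin k)) (h : BruhatLE σ0 σ)
    (i : Fin k) (hi : σ i = σ0 i) :
    (Finset.univ.filter fun r : Fin k => r < i ∧ σ i < σ r).card +
      (Finset.univ.filter fun r : Fin k => i < r ∧ σ r < σ i).card ≤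
    {t : Equiv.Perm (Fin k) | IsTransposition t ∧ t i ≠ i ∧ BruhatLE (σ0 * t) σ}.ncard := by
  classical
  open Finset St8 in
  have hLL := St8.LL σ0 σ h i hi
  have hLR := St8.LR σ0 σ h i hi
  set F := univ.filter (fun j : Fin k => (j < i ∨ i < j) ∧ BruhatLE (σ0 * Equiv.swap i j) σ)
    with hF
  have hFcard : (univ.filter fun j : Fin k => j < i ∧ BruhatLE (σ0 * Equiv.swap i j) σ).card
      + (univ.filter fun j : Fin k => i < j ∧ BruhatLE (σ0 * Equiv.swap i j) σ).card
      = F.card := by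
    rw [hF, fcongr (a := fun j : Fin k => (j < i ∨ i < j) ∧ BruhatLE (σ0 * Equiv.swap i j) σ)
      (b := fun j : Fin k => (j < i ∧ BruhatLE (σ0 * Equiv.swap i j) σ)
        ∨ (i < j ∧ BruhatLE (σ0 * Equiv.swap i j) σ)) (fun u => by tauto)]
    rw [Finset.filter_or]
    rw [Finset.card_union_of_disjoint]
    rw [Finset.disjoint_left]
    intro a ha1 ha2
    rw [mem_filter] at ha1 ha2
    exact absurd ha2.2.1 (not_lt.mpr (le_of_lt ha1.2.1))
  set F' := F.image (fun j => Equiv.swap i j) with hF'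
  have hF'card : F'.card = F.card := by
    rw [hF']
    apply Finset.card_image_of_injOn
    intro a _ b _ hab
    simp only at hab
    have : Equiv.swap i a i = Equiv.swap i b i := by rw [hab]
    simpa [Equiv.swap_apply_left] using this
  have hsub : (↑F' : Set (Equiv.Perm (Fin k)))
      ⊆ {t : Equiv.Perm (Fin k) | IsTransposition t ∧ t i ≠ i ∧ BruhatLE (σ0 * t) σ} := by
    intro t ht
    rw [Finset.mem_coe, hF', Finset.mem_image] at ht
    obtain ⟨j, hj, rfl⟩ := ht
    rw [hF, mem_filter] at hj
    have hne : i ≠ j := by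
      rcases hj.2.1 with h' | h'
      · exact (ne_of_lt h').symm
      · exact ne_of_lt h'
    refine ⟨⟨i, j, hne, rfl⟩, ?_, hj.2.2⟩
    rw [Equiv.swap_apply_left]
    exact fun he => hne he.symm
  have hncard : F'.card ≤
      {t : Equiv.Perm (Fin k) | IsTransposition t ∧ t i ≠ i ∧ BruhatLE (σ0 * t) σ}.ncard := by
    rw [← Set.ncard_coe_finset F']
    exact Set.ncard_le_ncard hsub (Set.toFinite _)
  omega
end

section
/- Let M ∈ M_k. Let ∼ be the equivalence relation on {1,…,k} generated by: i ∼ j whenever there exists l with M_{i,l} = M_{j,l} = 1. Let C_1,…,C_s be its equivalence classes and r = #{i : |C_i| > 1}. Then the set {(σ1,σ2) ∈ S_k × S_k : P_{σ1} + P_{σ2} = M} has cardinality 2^r, and moreover for every pair (σ1,σ2) with P_{σ1} + P_{σ2} = M, the orbits of the permutation σ2^{−1}σ1 on {1,…,k} are exactly the classes C_1,…,C_s. -/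
lemma aux_pair_eq {α : Type*} [DecidableEq α] {a b c d : α}
    (h : ∀ l, ((if a = l then 1 else 0) + (if b = l then 1 else 0) : ℕ)
      = (if c = l then 1 else 0) + (if d = l then 1 else 0)) :
    (a = c ∧ b = d) ∨ (a = d ∧ b = c) := by
  by_cases h1 : a = c
  · subst h1
    have hb := h b
    have hbd : b = d := by
      by_cases h2 : d = b
      · exact h2.symm
      · exfalso
        simp only [if_neg h2, eq_self_iff_true, if_true] at hb
        omega
    exact Or.inl ⟨rfl, hbd⟩
  · have had : a = d := by
      by_cases h3 : d = a
      · exact h3.symm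
      · exfalso
        have ha := h a
        simp only [if_neg h3, if_neg (show ¬c = a from fun hh => h1 hh.symm),
          eq_self_iff_true, if_true] at ha
        omega
    subst had
    have hcg := h c
    have hbc : b = c := by
      by_cases h4 : b = c
      · exact h4
      · exfalso
        simp only [if_neg h4, if_neg h1, eq_self_iff_true, if_true] at hcg
        omega
    exact Or.inr ⟨rfl, hbc⟩



lemma aux_mem_D_iff {k : ℕ} {M : Matrix (Fin k) (Fin k) ℕ}
    {τ1 τ2 : Equiv.Perm (Fin k)} (hτ : PermMat τ1 + PermMat τ2 = M)
    (σ1 σ2 : Equiv.Perm (Fin k)) :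
    PermMat σ1 + PermMat σ2 = M ↔
      ∀ i, (σ1 i = τ1 i ∧ σ2 i = τ2 i) ∨ (σ1 i = τ2 i ∧ σ2 i = τ1 i) := by
  subst hτ
  constructor
  · intro h i
    refine aux_pair_eq (a := σ1 i) (b := σ2 i) (c := τ1 i) (d := τ2 i) fun l => ?_
    have := congrFun (congrFun h i) l
    simpa [PermMat, Matrix.add_apply] using this
  · intro h
    ext i l
    rcases h i with ⟨h1, h2⟩ | ⟨h1, h2⟩ <;>
      simp [Matrix.add_apply, PermMat, h1, h2] <;> omega

lemma aux_invariant_pow {k : ℕ} {σ : Equiv.Perm (Fin k)} {W : Fin k → Prop}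
    (h : ∀ i, W i → W (σ i)) : ∀ (n : ℕ) (i : Fin k), W i → W ((σ ^ n) i) := by
  intro n
  induction n with
  | zero => intro i hi; simpa using hi
  | succ n ih =>
      intro i hi
      rw [pow_succ, Equiv.Perm.mul_apply]
      exact ih _ (h i hi)

lemma aux_sameCycle_iff {k : ℕ} {M : Matrix (Fin k) (Fin k) ℕ}
    {σ1 σ2 : Equiv.Perm (Fin k)} (h : PermMat σ1 + PermMat σ2 = M) (i j : Fin k) :
    (σ2⁻¹ * σ1).SameCycle i j ↔ matRel M i j := by
  have hM : ∀ i l, M i l = (if σ1 i = l then 1 else 0) + (if σ2 i = l then 1 else 0) := by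
    intro i l; rw [← h]; rfl
  set σ : Equiv.Perm (Fin k) := σ2⁻¹ * σ1 with hσdef
  have hσ : ∀ i, σ i = σ2⁻¹ (σ1 i) := fun i => rfl
  have hfix : ∀ i, σ i = i ↔ σ1 i = σ2 i := by
    intro i
    rw [hσ]
    constructor
    · intro hh; have := congrArg σ2 hh; simpa using this
    · intro hh; rw [hh]; simp
  have hone : ∀ i l, M i l = 1 → (σ1 i = l ∧ σ2 i ≠ l) ∨ (σ1 i ≠ l ∧ σ2 i = l) := by
    intro i l h1
    rw [hM i l] at h1
    by_cases e1 : σ1 i = l <;> by_cases e2 : σ2 i = l <;> simp [e1, e2] at h1 ⊢ <;> tauto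
  have hstep : ∀ i, matRel M i (σ i) := by
    intro i
    by_cases hf : σ1 i = σ2 i
    · rw [(hfix i).mpr hf]; exact Relation.EqvGen.refl i
    · refine Relation.EqvGen.rel _ _ ⟨σ1 i, ?_, ?_⟩
      · have h' : σ2 i ≠ σ1 i := fun hh => hf hh.symm
        rw [hM]; simp [h']
      · have h2 : σ2 (σ i) = σ1 i := by rw [hσ]; simp
        have h1 : σ1 (σ i) ≠ σ1 i := by
          intro hh
          have : σ i = i := σ1.injective hh
          exact hf ((hfix i).mp this)
        rw [hM]; simp [h1, h2]
  constructor
  · intro hsc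
    obtain ⟨n, -, rfl⟩ := hsc.exists_pow_eq'
    clear hsc
    induction n with
    | zero => simp only [pow_zero, Equiv.Perm.one_apply]; exact Relation.EqvGen.refl i
    | succ n ih =>
        have : (σ ^ (n + 1)) i = σ ((σ ^ n) i) := by
          rw [pow_succ', Equiv.Perm.mul_apply]
        rw [this]
        exact Relation.EqvGen.trans _ _ _ ih (hstep _)
  · intro hmr
    induction hmr with
    | rel x y hxy =>
        obtain ⟨l, hx, hy⟩ := hxy
        rcases hone x l hx with ⟨e1, e2⟩ | ⟨e1, e2⟩ <;>
          rcases hone y l hy with ⟨f1, f2⟩ | ⟨f1, f2⟩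
        · have : x = y := σ1.injective (by rw [e1, f1])
          rw [this]
        · have : y = σ x := by rw [hσ, e1, ← f2]; simp
          rw [this]; exact ⟨1, by simp⟩
        · have : x = σ y := by rw [hσ, f1, ← e2]; simp
          rw [this]
          exact Equiv.Perm.SameCycle.symm (⟨1, by simp⟩ : Equiv.Perm.SameCycle σ y (σ y))
        · have : x = y := σ2.injective (by rw [e2, f2])
          rw [this]
    | refl x => exact Equiv.Perm.SameCycle.refl σ x
    | symm x y _ ih => exact ih.symm
    | trans x y z _ _ ih1 ih2 => exact ih1.trans ih2


lemma aux_exists_decomp {k : ℕ} (M : Matrix (Fin k) (Fin k) ℕ)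
    (hrow : ∀ i, ∑ j, M i j = 2) (hcol : ∀ j, ∑ i, M i j = 2) :
    ∃ τ1 τ2 : Equiv.Perm (Fin k), PermMat τ1 + PermMat τ2 = M := by
  classical
  set t : Fin k → Finset (Fin k) := fun i => Finset.univ.filter fun j => 1 ≤ M i j with ht
  have hall : ∀ s : Finset (Fin k), s.card ≤ (s.biUnion t).card := by
    intro s
    set B := s.biUnion t with hB
    have h1 : ∀ i ∈ s, ∑ j ∈ B, M i j = 2 := by
      intro i hi
      rw [← hrow i]
      refine Finset.sum_subset (Finset.subset_univ B) fun j _ hj => ?_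
      by_contra hne
      exact hj (Finset.mem_biUnion.mpr ⟨i, hi, by simp [ht, Nat.one_le_iff_ne_zero, hne]⟩)
    have h2 : 2 * s.card ≤ 2 * B.card := by
      calc 2 * s.card = ∑ i ∈ s, ∑ j ∈ B, M i j := by
            rw [Finset.sum_congr rfl h1, Finset.sum_const, smul_eq_mul, mul_comm]
        _ = ∑ j ∈ B, ∑ i ∈ s, M i j := Finset.sum_comm
        _ ≤ ∑ j ∈ B, 2 := by
            refine Finset.sum_le_sum fun j _ => ?_
            rw [← hcol j]
            exact Finset.sum_le_sum_of_subset (Finset.subset_univ s)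
        _ = 2 * B.card := by rw [Finset.sum_const, smul_eq_mul, mul_comm]
    omega
  obtain ⟨f, hfinj, hf⟩ := (Finset.all_card_le_biUnion_card_iff_exists_injective t).mp hall
  have hf1 : ∀ i, 1 ≤ M i (f i) := by
    intro i; have := hf i; rw [ht] at this; simpa using this
  have hfbij : Function.Bijective f := Finite.injective_iff_bijective.mp hfinj
  set τ1 : Equiv.Perm (Fin k) := Equiv.ofBijective f hfbij with hτ1
  have hτ1app : ∀ i, τ1 i = f i := fun i => rfl
  set M' : Matrix (Fin k) (Fin k) ℕ := fun i j => M i j - (if f i = j then 1 else 0) with hM'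
  have hP_le : ∀ i j, (if f i = j then 1 else 0) ≤ M i j := by
    intro i j
    by_cases hj : f i = j
    · rw [if_pos hj, ← hj]; exact hf1 i
    · simp [hj]
  have hsub : ∀ i j, M' i j + (if f i = j then 1 else 0) = M i j := by
    intro i j; exact Nat.sub_add_cancel (hP_le i j)
  have hrow' : ∀ i, ∑ j, M' i j = 1 := by
    intro i
    have : ∑ j, M' i j + ∑ j, (if f i = j then 1 else 0) = 2 := by
      rw [← Finset.sum_add_distrib, Finset.sum_congr rfl fun j _ => hsub i j, hrow i]
    simpa using this
  have hcol' : ∀ j, ∑ i, M' i j = 1 := by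
    intro j
    have hs : ∑ i, (if f i = j then 1 else 0) = 1 := by
      have : ∀ i : Fin k, (f i = j) = (i = τ1.symm j) := by
        intro i
        apply propext
        constructor
        · intro hh
          refine τ1.injective ?_
          rw [τ1.apply_symm_apply]
          exact hh
        · intro hh; subst hh; exact τ1.apply_symm_apply j
      simp [this]
    have : ∑ i, M' i j + ∑ i, (if f i = j then 1 else 0) = 2 := by
      rw [← Finset.sum_add_distrib, Finset.sum_congr rfl fun i _ => hsub i j, hcol j]
    omega
  have hex : ∀ i, ∃ j, 1 ≤ M' i j := by
    intro i
    by_contra hc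
    push_neg at hc
    have : ∑ j, M' i j = 0 := Finset.sum_eq_zero fun j _ => by have := hc j; omega
    rw [hrow' i] at this; exact one_ne_zero this
  choose g hg using hex
  have hgone : ∀ i, M' i (g i) = 1 := by
    intro i
    have h1 : M' i (g i) ≤ ∑ j, M' i j :=
      Finset.single_le_sum (fun j _ => Nat.zero_le _) (Finset.mem_univ _)
    rw [hrow' i] at h1
    have := hg i; omega
  have hgzero : ∀ i j, j ≠ g i → M' i j = 0 := by
    intro i j hj
    have h1 : M' i (g i) + M' i j ≤ ∑ l, M' i l := by
      rw [← Finset.sum_pair (Ne.symm hj)]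
      exact Finset.sum_le_sum_of_subset (Finset.subset_univ _)
    rw [hrow' i] at h1
    have := hgone i; omega
  have hginj : Function.Injective g := by
    intro i i' hii
    by_contra hne
    have h1 : M' i (g i) + M' i' (g i) ≤ ∑ l, M' l (g i) := by
      have h2 : ∑ l ∈ ({i, i'} : Finset (Fin k)), M' l (g i) ≤ ∑ l, M' l (g i) :=
        Finset.sum_le_sum_of_subset (Finset.subset_univ _)
      rwa [Finset.sum_pair hne] at h2
    rw [hcol' (g i)] at h1
    have e1 := hgone i
    have e2 := hgone i'
    rw [← hii] at e2
    omega
  set τ2 : Equiv.Perm (Fin k) := Equiv.ofBijective g (Finite.injective_iff_bijective.mp hginj)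
    with hτ2
  refine ⟨τ1, τ2, ?_⟩
  ext i j
  show (if f i = j then 1 else 0) + (if g i = j then 1 else 0) = M i j
  rw [← hsub i j]
  by_cases hj : g i = j
  · rw [if_pos hj, ← hj, hgone i]; omega
  · rw [if_neg hj, hgzero i j (fun hh => hj hh.symm)]
    omega

lemma aux_fix_iff {k : ℕ} (τ1 τ2 : Equiv.Perm (Fin k)) (i : Fin k) :
    (τ2⁻¹ * τ1) i = i ↔ τ1 i = τ2 i := by
  constructor
  · intro h; have := congrArg τ2 h; simpa using this
  · intro h; show τ2⁻¹ (τ1 i) = i; rw [h]; simp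


theorem statement11 {k : ℕ} (M : Matrix (Fin k) (Fin k) ℕ)
    (hent : ∀ i j, M i j ≤ 2)
    (hrow : ∀ i, ∑ j, M i j = 2) (hcol : ∀ j, ∑ i, M i j = 2) :
    {p : Equiv.Perm (Fin k) × Equiv.Perm (Fin k) | PermMat p.1 + PermMat p.2 = M}.ncard =
      2 ^ {C : Set (Fin k) | (∃ i, C = {j | matRel M i j}) ∧ 1 < C.ncard}.ncard ∧
    ∀ σ1 σ2 : Equiv.Perm (Fin k), PermMat σ1 + PermMat σ2 = M →
      ∀ i j : Fin k, (σ2⁻¹ * σ1).SameCycle i j ↔ matRel M i j := by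
  classical
  obtain ⟨τ1, τ2, hτ⟩ := aux_exists_decomp M hrow hcol
  refine ⟨?_, fun σ1 σ2 h i j => aux_sameCycle_iff h i j⟩
  set σ : Equiv.Perm (Fin k) := τ2⁻¹ * τ1 with hσdef
  set D := {p : Equiv.Perm (Fin k) × Equiv.Perm (Fin k) | PermMat p.1 + PermMat p.2 = M}
    with hD
  set T := {C : Set (Fin k) | (∃ i, C = {j | matRel M i j}) ∧ 1 < C.ncard} with hT
  haveI : Finite (Set (Fin k)) := Finite.of_equiv (Fin k → Prop) (Equiv.refl _)
  have hsame : ∀ i j, σ.SameCycle i j ↔ matRel M i j := fun i j => aux_sameCycle_iff hτ i j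
  have heqv : Equivalence (matRel M) := Relation.EqvGen.is_equivalence _
  have hfixiff : ∀ i, σ i = i ↔ τ1 i = τ2 i := aux_fix_iff τ1 τ2
  have hτ2σ : ∀ i, τ2 (σ i) = τ1 i := by
    intro i; show τ2 ((τ2⁻¹ * τ1) i) = τ1 i; simp
  have hclass_eq : ∀ {i j : Fin k}, matRel M i j →
      {l | matRel M i l} = {l | matRel M j l} := by
    intro i j hij
    ext l
    exact ⟨fun h => heqv.trans (heqv.symm hij) h, fun h => heqv.trans hij h⟩
  have hfixclass : ∀ i, σ i = i → {j | matRel M i j} = {i} := by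
    intro i hi
    ext j
    simp only [Set.mem_setOf_eq, Set.mem_singleton_iff]
    constructor
    · intro hj
      obtain ⟨n, -, rfl⟩ := ((hsame i j).mpr hj).exists_pow_eq'
      exact Equiv.Perm.pow_apply_eq_self_of_apply_eq_self hi n
    · intro hj; rw [hj]; exact heqv.refl i
  have hT_ne : ∀ C ∈ T, ∀ i ∈ C, σ i ≠ i := by
    rintro C ⟨⟨i0, rfl⟩, hcard⟩ i hi hfx
    have h1 : {j | matRel M i0 j} = {i} := (hclass_eq hi).trans (hfixclass i hfx)
    rw [h1, Set.ncard_singleton] at hcard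
    omega
  have hne_T : ∀ i, σ i ≠ i → {j | matRel M i j} ∈ T := by
    intro i hi
    refine ⟨⟨i, rfl⟩, ?_⟩
    refine (Set.one_lt_ncard_iff (Set.toFinite _)).mpr
      ⟨i, σ i, heqv.refl i, (hsame i (σ i)).mp ⟨1, by simp⟩, fun hh => hi hh.symm⟩
  have hDmem : ∀ p : Equiv.Perm (Fin k) × Equiv.Perm (Fin k), p ∈ D ↔
      ∀ i, (p.1 i = τ1 i ∧ p.2 i = τ2 i) ∨ (p.1 i = τ2 i ∧ p.2 i = τ1 i) :=
    fun p => aux_mem_D_iff hτ p.1 p.2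
  have hW1 : ∀ s1 s2 : Equiv.Perm (Fin k), (s1, s2) ∈ D → ∀ i, s1 i ≠ τ1 i →
      s1 i = τ2 i ∧ s2 i = τ1 i ∧ τ1 i ≠ τ2 i := by
    intro s1 s2 hp i hi
    rcases (hDmem (s1, s2)).mp hp i with ⟨h1, h2⟩ | ⟨h1, h2⟩
    · exact absurd h1 hi
    · exact ⟨h1, h2, fun hh => hi (h1.trans hh.symm)⟩
  have hW2 : ∀ s1 s2 : Equiv.Perm (Fin k), (s1, s2) ∈ D → ∀ i, s1 i = τ1 i →
      s2 i = τ2 i := by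
    intro s1 s2 hp i hi
    rcases (hDmem (s1, s2)).mp hp i with ⟨h1, h2⟩ | ⟨h1, h2⟩
    · exact h2
    · rw [h2, ← hi, h1]
  have hstepW : ∀ s1 s2 : Equiv.Perm (Fin k), (s1, s2) ∈ D → ∀ i, s1 i ≠ τ1 i →
      s1 (σ i) ≠ τ1 (σ i) := by
    intro s1 s2 hp i hi hcon
    obtain ⟨e1, e2, e3⟩ := hW1 s1 s2 hp i hi
    have h4 := hW2 s1 s2 hp (σ i) hcon
    have h5 : s2 (σ i) = s2 i := by rw [h4, hτ2σ i, e2]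
    have h6 : σ i = i := s2.injective h5
    exact e3 ((hfixiff i).mp h6)
  have hWsc : ∀ s1 s2 : Equiv.Perm (Fin k), (s1, s2) ∈ D → ∀ i j, σ.SameCycle i j →
      s1 i ≠ τ1 i → s1 j ≠ τ1 j := by
    intro s1 s2 hs i j hsc hi
    obtain ⟨n, -, rfl⟩ := hsc.exists_pow_eq'
    exact aux_invariant_pow (fun x hx => hstepW s1 s2 hs x hx) n i hi
  have hclasses_eq : ∀ C ∈ T, ∀ C' ∈ T, ∀ i : Fin k, i ∈ C → i ∈ C' → C = C' := by
    rintro C ⟨⟨i0, rfl⟩, -⟩ C' ⟨⟨i0', rfl⟩, -⟩ i hi hi'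
    exact (hclass_eq hi).trans (hclass_eq hi').symm
  have hbij : Function.Bijective
      (fun (p : ↥D) (C : ↥T) => ∃ i ∈ C.1, p.1.1 i ≠ τ1 i) := by
    constructor
    · rintro ⟨⟨p1, p2⟩, hp⟩ ⟨⟨q1, q2⟩, hq⟩ hfe
      have hC : ∀ C : ↥T, (∃ i ∈ C.1, p1 i ≠ τ1 i) ↔ (∃ i ∈ C.1, q1 i ≠ τ1 i) :=
        fun C => iff_of_eq (congrFun hfe C)
      have fwd : ∀ s1 s2 u1 u2 : Equiv.Perm (Fin k), (s1, s2) ∈ D → (u1, u2) ∈ D →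
          (∀ C : ↥T, (∃ i ∈ C.1, s1 i ≠ τ1 i) → (∃ i ∈ C.1, u1 i ≠ τ1 i)) →
          ∀ i, s1 i ≠ τ1 i → u1 i ≠ τ1 i := by
        intro s1 s2 u1 u2 hs hu hCC i hi
        have hσi : σ i ≠ i := fun hf => (hW1 s1 s2 hs i hi).2.2 ((hfixiff i).mp hf)
        have hCT : {j | matRel M i j} ∈ T := hne_T i hσi
        obtain ⟨j, hj1, hj2⟩ := hCC ⟨_, hCT⟩ ⟨i, heqv.refl i, hi⟩
        exact hWsc u1 u2 hu j i ((hsame i j).mpr hj1).symm hj2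
      have hiff : ∀ i, p1 i ≠ τ1 i ↔ q1 i ≠ τ1 i := by
        intro i
        exact ⟨fwd p1 p2 q1 q2 hp hq (fun C => (hC C).mp) i,
               fwd q1 q2 p1 p2 hq hp (fun C => (hC C).mpr) i⟩
      have h1eq : p1 = q1 := by
        ext i
        by_cases hi : p1 i ≠ τ1 i
        · rw [(hW1 p1 p2 hp i hi).1, (hW1 q1 q2 hq i ((hiff i).mp hi)).1]
        · have hpi : p1 i = τ1 i := not_not.mp hi
          have hqi : q1 i = τ1 i := not_not.mp (fun hh => hi ((hiff i).mpr hh))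
          rw [hpi, hqi]
      have h2eq : p2 = q2 := by
        ext i
        by_cases hi : p1 i ≠ τ1 i
        · rw [(hW1 p1 p2 hp i hi).2.1, (hW1 q1 q2 hq i ((hiff i).mp hi)).2.1]
        · have hpi : p1 i = τ1 i := not_not.mp hi
          have hqi : q1 i = τ1 i := not_not.mp (fun hh => hi ((hiff i).mpr hh))
          rw [hW2 p1 p2 hp i hpi, hW2 q1 q2 hq i hqi]
      simp only [Subtype.mk.injEq, Prod.mk.injEq]
      exact ⟨h1eq, h2eq⟩
    · intro g
      set A : Fin k → Prop := fun i => ∃ C : ↥T, i ∈ C.1 ∧ g C with hA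
      have hAfix : ∀ i, A i → σ i ≠ i := by
        rintro i ⟨C, hiC, -⟩; exact hT_ne C.1 C.2 i hiC
      have hCcl : ∀ (C : Set (Fin k)), C ∈ T → ∀ i j : Fin k, i ∈ C →
          σ.SameCycle i j → j ∈ C := by
        rintro C ⟨⟨i0, rfl⟩, -⟩ i j hi hsc
        exact heqv.trans hi ((hsame i j).mp hsc)
      have hAinv : ∀ i, A i → A (σ i) := by
        rintro i ⟨C, hiC, hgC⟩
        exact ⟨C, hCcl C.1 C.2 i (σ i) hiC ⟨1, by simp⟩, hgC⟩
      have hAinv' : ∀ i, A (σ i) → A i := by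
        rintro i ⟨C, hiC, hgC⟩
        refine ⟨C, hCcl C.1 C.2 (σ i) i hiC ?_, hgC⟩
        exact Equiv.Perm.SameCycle.symm ⟨1, by simp⟩
      set f1 : Fin k → Fin k := fun i => if A i then τ2 i else τ1 i with hf1
      set f2 : Fin k → Fin k := fun i => if A i then τ1 i else τ2 i with hf2
      have hinj1 : Function.Injective f1 := by
        intro i i' he
        have he' : (if A i then τ2 i else τ1 i) = (if A i' then τ2 i' else τ1 i') := he
        by_cases h1 : A i <;> by_cases h2 : A i'
        · rw [if_pos h1, if_pos h2] at he'; exact τ2.injective he'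
        · rw [if_pos h1, if_neg h2] at he'
          have hσi' : σ i' = i := by
            show τ2⁻¹ (τ1 i') = i
            rw [← he']; simp
          have hAi : A (σ i') := by rw [hσi']; exact h1
          exact absurd (hAinv' i' hAi) h2
        · rw [if_neg h1, if_pos h2] at he'
          have hσi : σ i = i' := by
            show τ2⁻¹ (τ1 i) = i'
            rw [he']; simp
          have hAi : A (σ i) := by rw [hσi]; exact h2
          exact absurd (hAinv' i hAi) h1
        · rw [if_neg h1, if_neg h2] at he'; exact τ1.injective he'
      have hinj2 : Function.Injective f2 := by
        intro i i' he
        have he' : (if A i then τ1 i else τ2 i) = (if A i' then τ1 i' else τ2 i') := he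
        by_cases h1 : A i <;> by_cases h2 : A i'
        · rw [if_pos h1, if_pos h2] at he'; exact τ1.injective he'
        · rw [if_pos h1, if_neg h2] at he'
          have hσi : σ i = i' := by
            show τ2⁻¹ (τ1 i) = i'
            rw [he']; simp
          exact absurd (by rw [← hσi]; exact hAinv i h1) h2
        · rw [if_neg h1, if_pos h2] at he'
          have hσi' : σ i' = i := by
            show τ2⁻¹ (τ1 i') = i
            rw [← he']; simp
          exact absurd (by rw [← hσi']; exact hAinv i' h2) h1
        · rw [if_neg h1, if_neg h2] at he'; exact τ2.injective he'
      set p1 : Equiv.Perm (Fin k) :=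
        Equiv.ofBijective f1 (Finite.injective_iff_bijective.mp hinj1) with hp1
      set p2 : Equiv.Perm (Fin k) :=
        Equiv.ofBijective f2 (Finite.injective_iff_bijective.mp hinj2) with hp2
      have hmem : (p1, p2) ∈ D := by
        refine (hDmem (p1, p2)).mpr fun i => ?_
        by_cases hi : A i
        · exact Or.inr ⟨if_pos hi, if_pos hi⟩
        · exact Or.inl ⟨if_neg hi, if_neg hi⟩
      refine ⟨⟨(p1, p2), hmem⟩, ?_⟩
      funext C
      rw [eq_iff_iff]
      constructor
      · rintro ⟨i, hiC, hi⟩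
        have hAi : A i := by
          by_contra hAi
          exact hi (if_neg hAi)
        obtain ⟨C', hiC', hgC'⟩ := hAi
        have hCC : C = C' := Subtype.ext (hclasses_eq C.1 C.2 C'.1 C'.2 i hiC hiC')
        rw [hCC]; exact hgC'
      · intro hgC
        have hCne : C.1.Nonempty := by
          have h2 := C.2.2
          exact Set.nonempty_of_ncard_ne_zero (by omega)
        obtain ⟨i, hiC⟩ := hCne
        have hAi : A i := ⟨C, hiC, hgC⟩
        refine ⟨i, hiC, ?_⟩
        have h1 : p1 i = τ2 i := if_pos hAi
        have h2 : τ1 i ≠ τ2 i := fun hh => (hT_ne C.1 C.2 i hiC) ((hfixiff i).mpr hh)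
        rw [h1]
        exact fun hh => h2 hh.symm
  calc D.ncard = Nat.card ↥D := (Nat.card_coe_set_eq D).symm
    _ = Nat.card (↥T → Prop) := Nat.card_congr (Equiv.ofBijective _ hbij)
    _ = Nat.card Prop ^ Nat.card ↥T := Nat.card_fun
    _ = 2 ^ T.ncard := by
        rw [Nat.card_eq_fintype_card, Fintype.card_prop, Nat.card_coe_set_eq]
end
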